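/- arXiv:1310.0418 — 7 statements merged into one kernel-verified Lean document; each statement's English description precedes it below -/
import Mathlib

section
/- Let I ⊆ ℝ be an open interval and let y : I → ℝ be four times continuously differentiable. Then y satisfies the ODE x·y·y'''' + (4x·y' + 3y)·y''' + 3x·(y'')² + 9·y'·y'' = 0 at every x ∈ I if and only if there exist real constants c₀, c₁, c₂ such that x·y(x)·y'(x) = c₀ + c₁·x + c₂·x² for all x ∈ I. -/
/-- `u' = V` where `u = x y y'`. -/
noncomputable def exV (y : ℝ → ℝ) (t : ℝ) : ℝ :=
  y t * deriv y t + t * deriv y t ^ 2 + t * y t * deriv (deriv y) t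

/-- `u'' = W`. -/
noncomputable def exW (y : ℝ → ℝ) (t : ℝ) : ℝ :=
  2 * deriv y t ^ 2 + 2 * y t * deriv (deriv y) t
    + 3 * t * deriv y t * deriv (deriv y) t + t * y t * deriv (deriv (deriv y)) t

lemma exV_hasDerivAt {y : ℝ → ℝ} {x : ℝ}
    (h0 : HasDerivAt y (deriv y x) x)
    (h1 : HasDerivAt (deriv y) (deriv (deriv y) x) x) :
    HasDerivAt (fun t => t * y t * deriv y t) (exV y x) x := by
  have := ((hasDerivAt_id' (x := x)).mul h0).mul h1
  convert this using 1
  · rfl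
  · rfl
  · rfl
  simp [exV]; ring

lemma exW_hasDerivAt {y : ℝ → ℝ} {x : ℝ}
    (h0 : HasDerivAt y (deriv y x) x)
    (h1 : HasDerivAt (deriv y) (deriv (deriv y) x) x)
    (h2 : HasDerivAt (deriv (deriv y)) (deriv (deriv (deriv y)) x) x) :
    HasDerivAt (exV y) (exW y x) x := by
  have := ((h0.mul h1).add ((hasDerivAt_id' (x := x)).mul (h1.pow 2))).add
    (((hasDerivAt_id' (x := x)).mul h0).mul h2)
  convert this using 1
  · rfl
  · rfl
  · rfl
  simp [exW]; ring

lemma exL_hasDerivAt {y : ℝ → ℝ} {x : ℝ}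
    (h0 : HasDerivAt y (deriv y x) x)
    (h1 : HasDerivAt (deriv y) (deriv (deriv y) x) x)
    (h2 : HasDerivAt (deriv (deriv y)) (deriv (deriv (deriv y)) x) x)
    (h3 : HasDerivAt (deriv (deriv (deriv y))) (deriv (deriv (deriv (deriv y))) x) x) :
    HasDerivAt (exW y)
      (x * y x * deriv (deriv (deriv (deriv y))) x
        + (4 * x * deriv y x + 3 * y x) * deriv (deriv (deriv y)) x
        + 3 * x * (deriv (deriv y) x) ^ 2
        + 9 * deriv y x * deriv (deriv y) x) x := by
  have p1 := (hasDerivAt_const x (2:ℝ)).mul (h1.pow 2)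
  have p2 := ((hasDerivAt_const x (2:ℝ)).mul h0).mul h2
  have p3 := (((hasDerivAt_const x (3:ℝ)).mul (hasDerivAt_id' (x := x))).mul h1).mul h2
  have p4 := (((hasDerivAt_id' (x := x)).mul h0)).mul h3
  have := ((p1.add p2).add p3).add p4
  convert this using 1
  · rfl
  · rfl
  · rfl
  simp only [Pi.mul_apply]
  ring

lemma exConst {I : Set ℝ} (hI : IsOpen I) (hconv : Convex ℝ I) {f : ℝ → ℝ}
    (hf : ∀ x ∈ I, HasDerivAt f 0 x) {a : ℝ} (ha : a ∈ I) :
    ∀ x ∈ I, f x = f a := by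
  intro x hx
  refine hconv.is_const_of_fderivWithin_eq_zero
    (fun z hz => (hf z hz).differentiableAt.differentiableWithinAt) (fun z hz => ?_) hx ha
  rw [fderivWithin_of_isOpen hI hz, (hf z hz).hasFDerivAt.fderiv]
  ext; simp

/-- Example 1 of the paper: a `C⁴` function `y` on an open interval `I` satisfies
`x y y'''' + (4 x y' + 3 y) y''' + 3 x (y'')² + 9 y' y'' = 0` on `I` iff
`x y y'` is a quadratic polynomial on `I`. -/
theorem stmt_1 (I : Set ℝ) (hI : IsOpen I) (hIconn : IsPreconnected I)
    (y : ℝ → ℝ) (hy : ContDiffOn ℝ 4 y I) :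
    (∀ x ∈ I,
        x * y x * deriv (deriv (deriv (deriv y))) x
          + (4 * x * deriv y x + 3 * y x) * deriv (deriv (deriv y)) x
          + 3 * x * (deriv (deriv y) x) ^ 2
          + 9 * deriv y x * deriv (deriv y) x = 0)
      ↔ ∃ c₀ c₁ c₂ : ℝ, ∀ x ∈ I,
          x * y x * deriv y x = c₀ + c₁ * x + c₂ * x ^ 2 := by
  have hconv : Convex ℝ I := convex_iff_ordConnected.mpr hIconn.ordConnected
  have hy1 : ContDiffOn ℝ 3 (deriv y) I := hy.deriv_of_isOpen hI (by norm_num)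
  have hy2 : ContDiffOn ℝ 2 (deriv (deriv y)) I := hy1.deriv_of_isOpen hI (by norm_num)
  have hy3 : ContDiffOn ℝ 1 (deriv (deriv (deriv y))) I := hy2.deriv_of_isOpen hI (by norm_num)
  have h0 : ∀ x ∈ I, HasDerivAt y (deriv y x) x := fun x hx =>
    ((hy.differentiableOn (by norm_num)).differentiableAt (hI.mem_nhds hx)).hasDerivAt
  have h1 : ∀ x ∈ I, HasDerivAt (deriv y) (deriv (deriv y) x) x := fun x hx =>
    ((hy1.differentiableOn (by norm_num)).differentiableAt (hI.mem_nhds hx)).hasDerivAt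
  have h2 : ∀ x ∈ I, HasDerivAt (deriv (deriv y)) (deriv (deriv (deriv y)) x) x := fun x hx =>
    ((hy2.differentiableOn (by norm_num)).differentiableAt (hI.mem_nhds hx)).hasDerivAt
  have h3 : ∀ x ∈ I, HasDerivAt (deriv (deriv (deriv y)))
      (deriv (deriv (deriv (deriv y))) x) x := fun x hx =>
    ((hy3.differentiableOn (by norm_num)).differentiableAt (hI.mem_nhds hx)).hasDerivAt
  constructor
  · intro hode
    rcases I.eq_empty_or_nonempty with rfl | ⟨x₀, hx₀⟩
    · exact ⟨0, 0, 0, fun x hx => absurd hx (by simp)⟩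
    -- W is constant
    have hW0 : ∀ x ∈ I, HasDerivAt (exW y) 0 x := fun x hx => by
      have := exL_hasDerivAt (h0 x hx) (h1 x hx) (h2 x hx) (h3 x hx)
      rwa [hode x hx] at this
    set a := exW y x₀ with ha
    have hWa : ∀ x ∈ I, exW y x = a := exConst hI hconv hW0 hx₀
    -- V x - a x is constant
    have hV0 : ∀ x ∈ I, HasDerivAt (fun t => exV y t - a * t) 0 x := fun x hx => by
      have := (exW_hasDerivAt (h0 x hx) (h1 x hx) (h2 x hx)).sub
        ((hasDerivAt_const x a).mul (hasDerivAt_id' (x := x)))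
      have e : exW y x - (0 * x + a * 1) = 0 := by rw [hWa x hx]; ring
      rwa [e] at this
    set b := exV y x₀ - a * x₀ with hb
    have hVb : ∀ x ∈ I, exV y x - a * x = b := exConst hI hconv hV0 hx₀
    -- u - b x - (a/2) x^2 is constant
    have hU0 : ∀ x ∈ I,
        HasDerivAt (fun t => t * y t * deriv y t - b * t - a / 2 * t ^ 2) 0 x := fun x hx => by
      have := ((exV_hasDerivAt (h0 x hx) (h1 x hx)).sub
        ((hasDerivAt_const x b).mul (hasDerivAt_id' (x := x)))).sub
        ((hasDerivAt_const x (a / 2)).mul (hasDerivAt_pow 2 x))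
      convert this using 1
      · rfl
      · rfl
      · rfl
      have := hVb x hx
      norm_num
      nlinarith [hVb x hx]
    set c := x₀ * y x₀ * deriv y x₀ - b * x₀ - a / 2 * x₀ ^ 2 with hc
    have hUc := exConst hI hconv hU0 hx₀
    refine ⟨c, b, a / 2, fun x hx => ?_⟩
    have := hUc x hx
    simp only [hc] at this ⊢
    nlinarith [this]
  · rintro ⟨c₀, c₁, c₂, hpoly⟩ x hx
    -- V = c₁ + 2 c₂ t on I
    have hVeq : ∀ z ∈ I, exV y z = c₁ + 2 * c₂ * z := by
      intro z hz
      have hp : HasDerivAt (fun t : ℝ => c₀ + c₁ * t + c₂ * t ^ 2)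
          (0 + (0 * z + c₁ * 1) + (0 * z ^ 2 + c₂ * (↑2 * z ^ 1))) z :=
        ((hasDerivAt_const z c₀).add ((hasDerivAt_const z c₁).mul (hasDerivAt_id' (x := z)))).add
          ((hasDerivAt_const z c₂).mul (hasDerivAt_pow 2 z))
      have heq : (fun t => t * y t * deriv y t) =ᶠ[nhds z]
          (fun t : ℝ => c₀ + c₁ * t + c₂ * t ^ 2) :=
        Filter.eventuallyEq_of_mem (hI.mem_nhds hz) hpoly
      have := (hp.congr_of_eventuallyEq heq).unique (exV_hasDerivAt (h0 z hz) (h1 z hz))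
      rw [← this]; ring
    -- W = 2 c₂ on I
    have hWeq : ∀ z ∈ I, exW y z = 2 * c₂ := by
      intro z hz
      have hp : HasDerivAt (fun t : ℝ => c₁ + 2 * c₂ * t) (0 + (0 * z + 2 * c₂ * 1)) z :=
        (hasDerivAt_const z c₁).add ((hasDerivAt_const z (2 * c₂)).mul (hasDerivAt_id' (x := z)))
      have heq : exV y =ᶠ[nhds z] (fun t : ℝ => c₁ + 2 * c₂ * t) :=
        Filter.eventuallyEq_of_mem (hI.mem_nhds hz) hVeq
      have := (hp.congr_of_eventuallyEq heq).unique
        (exW_hasDerivAt (h0 z hz) (h1 z hz) (h2 z hz))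
      rw [← this]; ring
    -- L = 0
    have hp : HasDerivAt (fun _ : ℝ => 2 * c₂) 0 x := hasDerivAt_const x (2 * c₂)
    have heq : exW y =ᶠ[nhds x] (fun _ : ℝ => 2 * c₂) :=
      Filter.eventuallyEq_of_mem (hI.mem_nhds hx) hWeq
    exact ((hp.congr_of_eventuallyEq heq).unique
      (exL_hasDerivAt (h0 x hx) (h1 x hx) (h2 x hx) (h3 x hx))).symm
end

section
/- Let I ⊆ (0,∞) be an open interval and let y : I → ℝ be four times continuously differentiable. Then y satisfies the ODE x·y·y'''' + (4x·y' + 3y)·y''' + 3x·(y'')² + 9·y'·y'' = 0 at every x ∈ I if and only if there exist real constants a, b, c, d such that y(x)² = a·ln x + b·x + c·x² + d for all x ∈ I. -/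
lemma my_const_of_deriv_zero {I : Set ℝ} (hI : IsOpen I) (hconv : Convex ℝ I) {f : ℝ → ℝ}
    (hf : ∀ x ∈ I, HasDerivAt f 0 x) {x₀ x : ℝ} (hx₀ : x₀ ∈ I) (hx : x ∈ I) : f x = f x₀ :=
  hconv.is_const_of_fderivWithin_eq_zero
    (fun z hz => ((hf z hz).differentiableAt).differentiableWithinAt)
    (fun z hz => by
      rw [fderivWithin_of_isOpen hI hz, (hf z hz).hasFDerivAt.fderiv]
      ext; simp) hx hx₀

lemma my_deriv3_congr {I : Set ℝ} (hI : IsOpen I) {f g : ℝ → ℝ} (h : Set.EqOn f g I)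
    {x : ℝ} (hx : x ∈ I) : deriv (deriv (deriv f)) x = deriv (deriv (deriv g)) x := by
  have h1 : Set.EqOn (deriv f) (deriv g) I := fun z hz =>
    (Filter.eventuallyEq_of_mem (hI.mem_nhds hz) h).deriv_eq
  have h2 : Set.EqOn (deriv (deriv f)) (deriv (deriv g)) I := fun z hz =>
    (Filter.eventuallyEq_of_mem (hI.mem_nhds hz) h1).deriv_eq
  exact (Filter.eventuallyEq_of_mem (hI.mem_nhds hx) h2).deriv_eq

lemma my_quad_deriv3 (A B C : ℝ) :
    deriv (deriv (deriv (fun t : ℝ => A + B * t + C * t ^ 2))) = fun _ => 0 := by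
  have h1 : deriv (fun t : ℝ => A + B * t + C * t ^ 2) = fun t => B + 2 * C * t := by
    funext t
    have H : HasDerivAt (fun t : ℝ => A + B * t + C * t ^ 2) (B + 2 * C * t) t := by
      have := ((hasDerivAt_const t A).add ((hasDerivAt_id t).const_mul B)).add
        ((hasDerivAt_pow 2 t).const_mul C)
      refine this.congr_deriv ?_
      push_cast; ring
    exact H.deriv
  rw [h1]
  have h2 : deriv (fun t : ℝ => B + 2 * C * t) = fun _ => 2 * C := by
    funext t
    have H : HasDerivAt (fun t : ℝ => B + 2 * C * t) (2 * C) t := by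
      have := (hasDerivAt_const t B).add ((hasDerivAt_id t).const_mul (2 * C))
      exact this.congr_deriv (by ring)
    exact H.deriv
  rw [h2]
  funext t
  simp

/-- Example 1 of the paper, integrated form: for a `C⁴` function `y` on an open interval
`I ⊆ (0,∞)`, the ODE `x y y'''' + (4 x y' + 3 y) y''' + 3 x (y'')² + 9 y' y'' = 0` holds on `I`
iff `y² = a ln x + b x + c x² + d` on `I` for some constants `a, b, c, d`. -/
theorem stmt_2 (I : Set ℝ) (hI : IsOpen I) (hIconn : IsPreconnected I)
    (hIpos : I ⊆ Set.Ioi (0 : ℝ))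
    (y : ℝ → ℝ) (hy : ContDiffOn ℝ 4 y I) :
    (∀ x ∈ I,
        x * y x * deriv (deriv (deriv (deriv y))) x
          + (4 * x * deriv y x + 3 * y x) * deriv (deriv (deriv y)) x
          + 3 * x * (deriv (deriv y) x) ^ 2
          + 9 * deriv y x * deriv (deriv y) x = 0)
      ↔ ∃ a b c d : ℝ, ∀ x ∈ I,
          (y x) ^ 2 = a * Real.log x + b * x + c * x ^ 2 + d := by
  rcases I.eq_empty_or_nonempty with rfl | ⟨x₀, hx₀⟩
  · simp
  have hconv : Convex ℝ I := convex_iff_ordConnected.mpr hIconn.ordConnected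
  set y1 := deriv y with hy1d
  set y2 := deriv y1 with hy2d
  set y3 := deriv y2 with hy3d
  set y4 := deriv y3 with hy4d
  -- smoothness of derivatives
  have hCy1 : ContDiffOn ℝ 3 y1 I := hy.deriv_of_isOpen hI (by norm_num)
  have hCy2 : ContDiffOn ℝ 2 y2 I := hCy1.deriv_of_isOpen hI (by norm_num)
  have hCy3 : ContDiffOn ℝ 1 y3 I := hCy2.deriv_of_isOpen hI (by norm_num)
  have hdy : ∀ x ∈ I, HasDerivAt y (y1 x) x := fun x hx =>
    ((hy.differentiableOn (by norm_num)).differentiableAt (hI.mem_nhds hx)).hasDerivAt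
  have hdy1 : ∀ x ∈ I, HasDerivAt y1 (y2 x) x := fun x hx =>
    ((hCy1.differentiableOn (by norm_num)).differentiableAt (hI.mem_nhds hx)).hasDerivAt
  have hdy2 : ∀ x ∈ I, HasDerivAt y2 (y3 x) x := fun x hx =>
    ((hCy2.differentiableOn (by norm_num)).differentiableAt (hI.mem_nhds hx)).hasDerivAt
  have hdy3 : ∀ x ∈ I, HasDerivAt y3 (y4 x) x := fun x hx =>
    ((hCy3.differentiableOn (by norm_num)).differentiableAt (hI.mem_nhds hx)).hasDerivAt
  set u : ℝ → ℝ := fun t => t * y t * y1 t with hud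
  set u1 : ℝ → ℝ := fun t => y t * y1 t + t * (y1 t) ^ 2 + t * y t * y2 t with hu1d
  set u2 : ℝ → ℝ := fun t =>
    2 * (y1 t) ^ 2 + 2 * y t * y2 t + 3 * t * y1 t * y2 t + t * y t * y3 t with hu2d
  have hU : ∀ x ∈ I, HasDerivAt u (u1 x) x := by
    intro x hx
    have h := ((hasDerivAt_id x).mul (hdy x hx)).mul (hdy1 x hx)
    refine h.congr_deriv ?_
    simp only [hu1d, id_eq, Pi.mul_apply, Pi.pow_apply]; push_cast; ring
  have hU1 : ∀ x ∈ I, HasDerivAt u1 (u2 x) x := by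
    intro x hx
    have h := (((hdy x hx).mul (hdy1 x hx)).add
        ((hasDerivAt_id x).mul ((hdy1 x hx).pow 2))).add
        (((hasDerivAt_id x).mul (hdy x hx)).mul (hdy2 x hx))
    refine h.congr_deriv ?_
    simp only [hu2d, id_eq, Pi.mul_apply, Pi.pow_apply]; push_cast; ring
  have hU2 : ∀ x ∈ I, HasDerivAt u2
      (x * y x * y4 x + (4 * x * y1 x + 3 * y x) * y3 x + 3 * x * (y2 x) ^ 2
        + 9 * y1 x * y2 x) x := by
    intro x hx
    have h := (((((hdy1 x hx).pow 2).const_mul 2).add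
        (((hdy x hx).const_mul 2).mul (hdy2 x hx))).add
        ((((hasDerivAt_id x).const_mul 3).mul (hdy1 x hx)).mul (hdy2 x hx))).add
        (((hasDerivAt_id x).mul (hdy x hx)).mul (hdy3 x hx))
    refine h.congr_deriv ?_
    simp only [id_eq, Pi.mul_apply, Pi.pow_apply]; push_cast; ring
  have hd1 : Set.EqOn (deriv u) u1 I := fun z hz => (hU z hz).deriv
  have hd2 : Set.EqOn (deriv (deriv u)) u2 I := fun z hz => by
    rw [(Filter.eventuallyEq_of_mem (hI.mem_nhds hz) hd1).deriv_eq]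
    exact (hU1 z hz).deriv
  have key : ∀ x ∈ I, deriv (deriv (deriv u)) x =
      x * y x * y4 x + (4 * x * y1 x + 3 * y x) * y3 x + 3 * x * (y2 x) ^ 2
        + 9 * y1 x * y2 x := fun z hz => by
    rw [(Filter.eventuallyEq_of_mem (hI.mem_nhds hz) hd2).deriv_eq]
    exact (hU2 z hz).deriv
  constructor
  · intro h
    have hu2' : ∀ x ∈ I, HasDerivAt u2 0 x := by
      intro x hx
      have := hU2 x hx
      rwa [h x hx] at this
    obtain ⟨c2, hc2⟩ : ∃ c2, ∀ x ∈ I, u2 x = c2 :=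
      ⟨u2 x₀, fun x hx => my_const_of_deriv_zero hI hconv hu2' hx₀ hx⟩
    have hu1' : ∀ x ∈ I, HasDerivAt (fun t => u1 t - c2 * t) 0 x := by
      intro x hx
      have h' := (hU1 x hx).sub ((hasDerivAt_id x).const_mul c2)
      have : u2 x - c2 * 1 = 0 := by rw [hc2 x hx]; ring
      rwa [this] at h'
    obtain ⟨c1, hc1⟩ : ∃ c1, ∀ x ∈ I, u1 x - c2 * x = c1 :=
      ⟨u1 x₀ - c2 * x₀, fun x hx => my_const_of_deriv_zero hI hconv hu1' hx₀ hx⟩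
    have hu' : ∀ x ∈ I, HasDerivAt (fun t => u t - (c2 / 2 * t ^ 2 + c1 * t)) 0 x := by
      intro x hx
      have h' := (hU x hx).sub
        (((hasDerivAt_pow 2 x).const_mul (c2 / 2)).add ((hasDerivAt_id x).const_mul c1))
      refine h'.congr_deriv ?_
      have e := hc1 x hx
      push_cast
      linear_combination e
    obtain ⟨c0, hc0⟩ : ∃ c0, ∀ x ∈ I, u x = c2 / 2 * x ^ 2 + c1 * x + c0 := by
      refine ⟨u x₀ - (c2 / 2 * x₀ ^ 2 + c1 * x₀), fun x hx => ?_⟩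
      have := my_const_of_deriv_zero hI hconv hu' hx₀ hx
      linarith [this]
    -- now y² has derivative 2 y y' = c2 x + 2 c1 + 2 c0 / x on I
    have hg : ∀ x ∈ I, HasDerivAt
        (fun t => (y t) ^ 2 - (c2 / 2 * t ^ 2 + 2 * c1 * t + 2 * c0 * Real.log t)) 0 x := by
      intro x hx
      have hxpos : (0 : ℝ) < x := hIpos hx
      have h' := ((hdy x hx).pow 2).sub
        ((((hasDerivAt_pow 2 x).const_mul (c2 / 2)).add
          ((hasDerivAt_id x).const_mul (2 * c1))).add
          ((Real.hasDerivAt_log hxpos.ne').const_mul (2 * c0)))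
      refine h'.congr_deriv ?_
      have hu := hc0 x hx
      simp only [hud] at hu
      push_cast
      field_simp
      linear_combination 2 * hu
    refine ⟨2 * c0, 2 * c1, c2 / 2, (y x₀) ^ 2 -
      (c2 / 2 * x₀ ^ 2 + 2 * c1 * x₀ + 2 * c0 * Real.log x₀), fun x hx => ?_⟩
    have := my_const_of_deriv_zero hI hconv hg hx₀ hx
    linarith [this]
  · rintro ⟨a, b, c, d, h⟩
    intro x hx
    rw [← key x hx]
    -- u equals a quadratic on I
    have hq : Set.EqOn u (fun t => a / 2 + b / 2 * t + c * t ^ 2) I := by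
      intro z hz
      have hzpos : (0 : ℝ) < z := hIpos hz
      have hF : HasDerivAt (fun t => a * Real.log t + b * t + c * t ^ 2 + d)
          (a * z⁻¹ + b * 1 + c * (↑2 * z ^ (2 - 1)) + 0) z :=
        ((((Real.hasDerivAt_log hzpos.ne').const_mul a).add
          ((hasDerivAt_id z).const_mul b)).add
          ((hasDerivAt_pow 2 z).const_mul c)).add (hasDerivAt_const z d)
      have heq : (fun t => (y t) ^ 2) =ᶠ[nhds z] fun t => a * Real.log t + b * t + c * t ^ 2 + d :=
        Filter.eventuallyEq_of_mem (hI.mem_nhds hz) fun w hw => h w hw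
      have hy2' : HasDerivAt (fun t => (y t) ^ 2)
          (a * z⁻¹ + b * 1 + c * (↑2 * z ^ (2 - 1)) + 0) z :=
        hF.congr_of_eventuallyEq heq
      have hy2'' : HasDerivAt (fun t => (y t) ^ 2) (↑2 * y z ^ (2 - 1) * y1 z) z :=
        (hdy z hz).pow 2
      have huniq := hy2''.unique hy2'
      simp only [hud]
      push_cast at huniq ⊢
      norm_num at huniq ⊢
      field_simp at huniq
      nlinarith [huniq]
    have h3 := my_deriv3_congr hI hq hx
    rw [h3, my_quad_deriv3 (a / 2) (b / 2) c]
end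

section
/- Let I ⊆ ℝ be an open interval and let y : I → ℝ be four times continuously differentiable with y(x) ≠ 0 for all x ∈ I. Then y satisfies y(x)³·y''''(x) − 4·y(x)²·y'(x)·y'''(x) − 3·y(x)²·(y''(x))² + 12·y(x)·(y'(x))²·y''(x) − 6·(y'(x))⁴ = 0 at every x ∈ I if and only if there exist real constants c₀, c₁, c₂ such that y'(x) = (c₀ + c₁·x + c₂·x²)·y(x) for all x ∈ I. -/
/-- On an open convex set, a function with vanishing derivative is constant. -/
lemma aux_const_of_deriv_eq_zero {I : Set ℝ} (hI : IsOpen I) (hconv : Convex ℝ I)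
    {f : ℝ → ℝ} (hd : ∀ x ∈ I, DifferentiableAt ℝ f x)
    (h0 : ∀ x ∈ I, deriv f x = 0) {a x : ℝ} (ha : a ∈ I) (hx : x ∈ I) :
    f x = f a := by
  refine hconv.is_const_of_fderivWithin_eq_zero
    (fun z hz => (hd z hz).differentiableWithinAt) (fun z hz => ?_) hx ha
  rw [fderivWithin_of_isOpen hI hz]
  have h1 : HasDerivAt f 0 z := by simpa [h0 z hz] using (hd z hz).hasDerivAt
  rw [h1.hasFDerivAt.fderiv]
  ext; simp

/-- Example 2 of the paper: a nonvanishing `C⁴` function `y` on an open interval `I` satisfies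
`y³ y'''' − 4 y² y' y''' − 3 y² (y'')² + 12 y (y')² y'' − 6 (y')⁴ = 0` on `I` iff its
logarithmic derivative `y'/y` is a quadratic polynomial, i.e. `y' = (c₀ + c₁ x + c₂ x²) y`. -/
theorem stmt_4 (I : Set ℝ) (hI : IsOpen I) (hIconn : IsPreconnected I)
    (y : ℝ → ℝ) (hy : ContDiffOn ℝ 4 y I) (hyne : ∀ x ∈ I, y x ≠ 0) :
    (∀ x ∈ I,
        (y x) ^ 3 * deriv (deriv (deriv (deriv y))) x
          - 4 * (y x) ^ 2 * deriv y x * deriv (deriv (deriv y)) x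
          - 3 * (y x) ^ 2 * (deriv (deriv y) x) ^ 2
          + 12 * y x * (deriv y x) ^ 2 * deriv (deriv y) x
          - 6 * (deriv y x) ^ 4 = 0)
      ↔ ∃ c₀ c₁ c₂ : ℝ, ∀ x ∈ I,
          deriv y x = (c₀ + c₁ * x + c₂ * x ^ 2) * y x := by
  have hconv : Convex ℝ I := hIconn.ordConnected.convex
  obtain ⟨u, hu_def⟩ : ∃ u : ℝ → ℝ, u = fun x => deriv y x / y x := ⟨_, rfl⟩
  have hy' : ContDiffOn ℝ 3 (deriv y) I := hy.deriv_of_isOpen hI (by norm_num)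
  have hu : ContDiffOn ℝ 3 u I := by
    rw [hu_def]; exact hy'.div (hy.of_le (by norm_num)) hyne
  have hu' : ContDiffOn ℝ 2 (deriv u) I := hu.deriv_of_isOpen hI (by norm_num)
  have hu'' : ContDiffOn ℝ 1 (deriv (deriv u)) I := hu'.deriv_of_isOpen hI (by norm_num)
  have hdy : ∀ x ∈ I, DifferentiableAt ℝ y x := fun x hx =>
    (hy.contDiffAt (hI.mem_nhds hx)).differentiableAt (by norm_num)
  have hdu : ∀ x ∈ I, DifferentiableAt ℝ u x := fun x hx =>
    (hu.contDiffAt (hI.mem_nhds hx)).differentiableAt (by norm_num)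
  have hdu' : ∀ x ∈ I, DifferentiableAt ℝ (deriv u) x := fun x hx =>
    (hu'.contDiffAt (hI.mem_nhds hx)).differentiableAt (by norm_num)
  have hdu'' : ∀ x ∈ I, DifferentiableAt ℝ (deriv (deriv u)) x := fun x hx =>
    (hu''.contDiffAt (hI.mem_nhds hx)).differentiableAt (by norm_num)
  have hy1 : ∀ x ∈ I, deriv y x = u x * y x := by
    intro x hx
    rw [hu_def]
    exact (div_mul_cancel₀ _ (hyne x hx)).symm
  -- second derivative
  have hy2 : ∀ x ∈ I, deriv (deriv y) x = (deriv u x + u x ^ 2) * y x := by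
    intro x hx
    have hev : deriv y =ᶠ[nhds x] fun t => u t * y t := by
      filter_upwards [hI.mem_nhds hx] with t ht using hy1 t ht
    have H : HasDerivAt (fun t => u t * y t)
        (deriv u x * y x + u x * deriv y x) x :=
      (hdu x hx).hasDerivAt.mul (hdy x hx).hasDerivAt
    rw [hev.deriv_eq, H.deriv, hy1 x hx]; ring
  -- third derivative
  have hy3 : ∀ x ∈ I, deriv (deriv (deriv y)) x =
      (deriv (deriv u) x + 3 * u x * deriv u x + u x ^ 3) * y x := by
    intro x hx
    have hev : deriv (deriv y) =ᶠ[nhds x] fun t => (deriv u t + u t ^ 2) * y t := by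
      filter_upwards [hI.mem_nhds hx] with t ht using hy2 t ht
    have H := ((hdu' x hx).hasDerivAt.add
      ((hdu x hx).hasDerivAt.pow 2)).mul (hdy x hx).hasDerivAt
    rw [hev.deriv_eq]; refine H.deriv.trans ?_
    rw [hy1 x hx]; simp only [Pi.add_apply, Pi.pow_apply, Pi.mul_apply]; push_cast; ring
  -- fourth derivative
  have hy4 : ∀ x ∈ I, deriv (deriv (deriv (deriv y))) x =
      (deriv (deriv (deriv u)) x + 4 * u x * deriv (deriv u) x + 3 * (deriv u x) ^ 2
        + 6 * u x ^ 2 * deriv u x + u x ^ 4) * y x := by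
    intro x hx
    have hev : deriv (deriv (deriv y)) =ᶠ[nhds x]
        fun t => (deriv (deriv u) t + 3 * u t * deriv u t + u t ^ 3) * y t := by
      filter_upwards [hI.mem_nhds hx] with t ht using hy3 t ht
    have H := (((hdu'' x hx).hasDerivAt.add
        (((hasDerivAt_const x (3 : ℝ)).mul (hdu x hx).hasDerivAt).mul
          (hdu' x hx).hasDerivAt)).add
      ((hdu x hx).hasDerivAt.pow 3)).mul (hdy x hx).hasDerivAt
    rw [hev.deriv_eq]; refine H.deriv.trans ?_
    rw [hy1 x hx]; simp only [Pi.add_apply, Pi.pow_apply, Pi.mul_apply]; push_cast; ring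
  -- key identity: the ODE left-hand side equals y⁴ · u'''
  have key : ∀ x ∈ I,
      (y x) ^ 3 * deriv (deriv (deriv (deriv y))) x
        - 4 * (y x) ^ 2 * deriv y x * deriv (deriv (deriv y)) x
        - 3 * (y x) ^ 2 * (deriv (deriv y) x) ^ 2
        + 12 * y x * (deriv y x) ^ 2 * deriv (deriv y) x
        - 6 * (deriv y x) ^ 4
        = (y x) ^ 4 * deriv (deriv (deriv u)) x := by
    intro x hx
    rw [hy4 x hx, hy3 x hx, hy2 x hx, hy1 x hx]; ring
  constructor
  · intro hODE
    rcases Set.eq_empty_or_nonempty I with hIe | ⟨x₀, hx₀⟩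
    · exact ⟨0, 0, 0, fun x hx => by rw [hIe] at hx; exact absurd hx (Set.notMem_empty x)⟩
    have h3 : ∀ x ∈ I, deriv (deriv (deriv u)) x = 0 := by
      intro x hx
      have h := (key x hx).symm.trans (hODE x hx)
      have hy4ne : (y x) ^ 4 ≠ 0 := pow_ne_zero _ (hyne x hx)
      exact (mul_eq_zero.mp h).resolve_left hy4ne
    obtain ⟨a, ha⟩ : ∃ a : ℝ, a = deriv (deriv u) x₀ := ⟨_, rfl⟩
    have hA : ∀ x ∈ I, deriv (deriv u) x = a := by
      intro x hx
      rw [ha]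
      exact aux_const_of_deriv_eq_zero hI hconv hdu'' h3 hx₀ hx
    obtain ⟨b, hb⟩ : ∃ b : ℝ, b = deriv u x₀ - a * x₀ := ⟨_, rfl⟩
    have hB : ∀ x ∈ I, deriv u x = a * x + b := by
      intro x hx
      have hd : ∀ z ∈ I, DifferentiableAt ℝ (fun t => deriv u t - a * t) z := fun z hz =>
        (hdu' z hz).sub (differentiableAt_id.const_mul a)
      have h0 : ∀ z ∈ I, deriv (fun t => deriv u t - a * t) z = 0 := by
        intro z hz
        have H : HasDerivAt (fun t => deriv u t - a * t) (deriv (deriv u) z - a * 1) z :=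
          (hdu' z hz).hasDerivAt.sub ((hasDerivAt_id' z).const_mul a)
        rw [H.deriv, hA z hz]; ring
      have h := aux_const_of_deriv_eq_zero hI hconv hd h0 hx₀ hx
      have h' : deriv u x - a * x = deriv u x₀ - a * x₀ := h
      rw [hb]; linarith
    obtain ⟨c, hc⟩ : ∃ c : ℝ, c = u x₀ - (a / 2 * x₀ ^ 2 + b * x₀) := ⟨_, rfl⟩
    have hC : ∀ x ∈ I, u x = a / 2 * x ^ 2 + b * x + c := by
      intro x hx
      have hd : ∀ z ∈ I, DifferentiableAt ℝ (fun t => u t - (a / 2 * t ^ 2 + b * t)) z :=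
        fun z hz => (hdu z hz).sub (((differentiableAt_id.pow 2).const_mul (a / 2)).add
          (differentiableAt_id.const_mul b))
      have h0 : ∀ z ∈ I, deriv (fun t => u t - (a / 2 * t ^ 2 + b * t)) z = 0 := by
        intro z hz
        have H := (hdu z hz).hasDerivAt.sub
          ((((hasDerivAt_id' z).pow 2).const_mul (a / 2)).add
            ((hasDerivAt_id' z).const_mul b))
        refine H.deriv.trans ?_
        rw [hB z hz]; push_cast; ring
      have h := aux_const_of_deriv_eq_zero hI hconv hd h0 hx₀ hx
      have h' : u x - (a / 2 * x ^ 2 + b * x) = u x₀ - (a / 2 * x₀ ^ 2 + b * x₀) := h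
      rw [hc]; linarith
    refine ⟨c, b, a / 2, fun x hx => ?_⟩
    rw [hy1 x hx, hC x hx]; ring
  · rintro ⟨c₀, c₁, c₂, hP⟩
    intro x hx
    have hup : ∀ t ∈ I, u t = c₀ + c₁ * t + c₂ * t ^ 2 := by
      intro t ht
      rw [hu_def]
      show deriv y t / y t = _
      rw [hP t ht]
      exact mul_div_cancel_right₀ _ (hyne t ht)
    have hu1 : ∀ t ∈ I, deriv u t = c₁ + 2 * c₂ * t := by
      intro t ht
      have hev : u =ᶠ[nhds t] fun s => c₀ + c₁ * s + c₂ * s ^ 2 := by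
        filter_upwards [hI.mem_nhds ht] with s hs using hup s hs
      have H : HasDerivAt (fun s => c₀ + c₁ * s + c₂ * s ^ 2) (c₁ + 2 * c₂ * t) t := by
        have := ((hasDerivAt_const t c₀).add ((hasDerivAt_id' t).const_mul c₁)).add
          (((hasDerivAt_id' t).pow 2).const_mul c₂)
        refine this.congr_deriv ?_
        push_cast; ring
      rw [hev.deriv_eq, H.deriv]
    have hu2 : ∀ t ∈ I, deriv (deriv u) t = 2 * c₂ := by
      intro t ht
      have hev : deriv u =ᶠ[nhds t] fun s => c₁ + 2 * c₂ * s := by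
        filter_upwards [hI.mem_nhds ht] with s hs using hu1 s hs
      have H : HasDerivAt (fun s => c₁ + 2 * c₂ * s) (2 * c₂) t := by
        have := (hasDerivAt_const t c₁).add ((hasDerivAt_id' t).const_mul (2 * c₂))
        refine this.congr_deriv ?_
        ring
      rw [hev.deriv_eq, H.deriv]
    have hu3 : deriv (deriv (deriv u)) x = 0 := by
      have hev : deriv (deriv u) =ᶠ[nhds x] fun _ => 2 * c₂ := by
        filter_upwards [hI.mem_nhds hx] with s hs using hu2 s hs
      rw [hev.deriv_eq, deriv_const]
    rw [key x hx, hu3, mul_zero]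
end

section
/- Let I ⊆ ℝ be an open interval and let y : I → ℝ be four times continuously differentiable with y(x) > 0 for all x ∈ I. Then y satisfies y(x)³·y''''(x) − 4·y(x)²·y'(x)·y'''(x) − 3·y(x)²·(y''(x))² + 12·y(x)·(y'(x))²·y''(x) − 6·(y'(x))⁴ = 0 at every x ∈ I if and only if there exist real constants a₀, a₁, a₂, a₃ such that y(x) = exp(a₀ + a₁·x + a₂·x² + a₃·x³) for all x ∈ I. -/
lemma eqOn_of_hasDerivAt_eq {I : Set ℝ} (hI : IsOpen I) (hc : Convex ℝ I) {f g d : ℝ → ℝ}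
    (hf : ∀ x ∈ I, HasDerivAt f (d x) x) (hg : ∀ x ∈ I, HasDerivAt g (d x) x)
    {x₀ : ℝ} (hx₀ : x₀ ∈ I) (h0 : f x₀ = g x₀) : Set.EqOn f g I := by
  apply hc.eqOn_of_fderivWithin_eq
    (fun x hx => (hf x hx).differentiableAt.differentiableWithinAt)
    (fun x hx => (hg x hx).differentiableAt.differentiableWithinAt)
    hI.uniqueDiffOn _ hx₀ h0
  intro x hx
  rw [fderivWithin_of_isOpen hI hx, fderivWithin_of_isOpen hI hx,
    (hf x hx).hasFDerivAt.fderiv, (hg x hx).hasFDerivAt.fderiv]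

/-- Example 2 of the paper, integrated form: a positive `C⁴` function `y` on an open interval
`I` satisfies `y³ y'''' − 4 y² y' y''' − 3 y² (y'')² + 12 y (y')² y'' − 6 (y')⁴ = 0` on `I`
iff `ln y` is a cubic polynomial, i.e. `y = exp(a₀ + a₁ x + a₂ x² + a₃ x³)` on `I`. -/
theorem stmt_5 (I : Set ℝ) (hI : IsOpen I) (hIconn : IsPreconnected I)
    (y : ℝ → ℝ) (hy : ContDiffOn ℝ 4 y I) (hypos : ∀ x ∈ I, 0 < y x) :
    (∀ x ∈ I,
        (y x) ^ 3 * deriv (deriv (deriv (deriv y))) x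
          - 4 * (y x) ^ 2 * deriv y x * deriv (deriv (deriv y)) x
          - 3 * (y x) ^ 2 * (deriv (deriv y) x) ^ 2
          + 12 * y x * (deriv y x) ^ 2 * deriv (deriv y) x
          - 6 * (deriv y x) ^ 4 = 0)
      ↔ ∃ a₀ a₁ a₂ a₃ : ℝ, ∀ x ∈ I,
          y x = Real.exp (a₀ + a₁ * x + a₂ * x ^ 2 + a₃ * x ^ 3) := by
  have hconv : Convex ℝ I := by rw [convex_iff_ordConnected]; exact hIconn.ordConnected
  set y1 := deriv y with hy1def
  set y2 := deriv y1 with hy2def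
  set y3 := deriv y2 with hy3def
  set y4 := deriv y3 with hy4def
  have hne : ∀ x ∈ I, y x ≠ 0 := fun x hx => (hypos x hx).ne'
  have hc1 : ContDiffOn ℝ 3 y1 I := hy.deriv_of_isOpen hI (by norm_num)
  have hc2 : ContDiffOn ℝ 2 y2 I := hc1.deriv_of_isOpen hI (by norm_num)
  have hc3 : ContDiffOn ℝ 1 y3 I := hc2.deriv_of_isOpen hI (by norm_num)
  have hdy : ∀ x ∈ I, HasDerivAt y (y1 x) x := fun x hx =>
    ((hy.contDiffAt (hI.mem_nhds hx)).differentiableAt (by norm_num)).hasDerivAt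
  have hdy1 : ∀ x ∈ I, HasDerivAt y1 (y2 x) x := fun x hx =>
    ((hc1.contDiffAt (hI.mem_nhds hx)).differentiableAt (by norm_num)).hasDerivAt
  have hdy2 : ∀ x ∈ I, HasDerivAt y2 (y3 x) x := fun x hx =>
    ((hc2.contDiffAt (hI.mem_nhds hx)).differentiableAt (by norm_num)).hasDerivAt
  have hdy3 : ∀ x ∈ I, HasDerivAt y3 (y4 x) x := fun x hx =>
    ((hc3.contDiffAt (hI.mem_nhds hx)).differentiableAt (by norm_num)).hasDerivAt
  set u : ℝ → ℝ := fun t => y1 t / y t with hudef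
  set w1 : ℝ → ℝ := fun t => (y2 t * y t - y1 t ^ 2) / y t ^ 2 with hw1def
  set w2 : ℝ → ℝ := fun t =>
    (y3 t * y t ^ 2 - 3 * y t * y1 t * y2 t + 2 * y1 t ^ 3) / y t ^ 3 with hw2def
  set w3 : ℝ → ℝ := fun t =>
    ((y t) ^ 3 * y4 t - 4 * (y t) ^ 2 * y1 t * y3 t - 3 * (y t) ^ 2 * (y2 t) ^ 2
      + 12 * y t * (y1 t) ^ 2 * y2 t - 6 * (y1 t) ^ 4) / y t ^ 4 with hw3def
  have hu : ∀ x ∈ I, HasDerivAt u (w1 x) x := by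
    intro x hx
    have h0 := hne x hx
    refine HasDerivAt.congr_deriv ((hdy1 x hx).div (hdy x hx) h0) ?_
    simp only [hw1def]
    field_simp
  have hw1d : ∀ x ∈ I, HasDerivAt w1 (w2 x) x := by
    intro x hx
    have h0 := hne x hx
    have hN : HasDerivAt (fun t => y2 t * y t - y1 t ^ 2)
        (y3 x * y x + y2 x * y1 x - (2 : ℕ) * y1 x ^ 1 * y2 x) x :=
      ((hdy2 x hx).mul (hdy x hx)).sub ((hdy1 x hx).pow 2)
    have hD : HasDerivAt (fun t => y t ^ 2) ((2 : ℕ) * y x ^ 1 * y1 x) x := (hdy x hx).pow 2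
    refine HasDerivAt.congr_deriv (hN.div hD (pow_ne_zero 2 h0)) ?_
    simp only [hw2def]
    field_simp
    ring
  have hw2d : ∀ x ∈ I, HasDerivAt w2 (w3 x) x := by
    intro x hx
    have h0 := hne x hx
    have hN := (((hdy3 x hx).mul ((hdy x hx).pow 2)).sub
        ((((hasDerivAt_const x (3 : ℝ)).mul (hdy x hx)).mul (hdy1 x hx)).mul (hdy2 x hx))).add
        ((hasDerivAt_const x (2 : ℝ)).mul ((hdy1 x hx).pow 3))
    have hD : HasDerivAt (fun t => y t ^ 3) ((3 : ℕ) * y x ^ 2 * y1 x) x := (hdy x hx).pow 3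
    refine HasDerivAt.congr_deriv (hN.div hD (pow_ne_zero 3 h0)) ?_
    simp only [hw3def, Pi.mul_apply, Pi.pow_apply, Pi.add_apply, Pi.sub_apply, Pi.neg_apply]
    field_simp
    ring
  have hu2 : ∀ x ∈ I, HasDerivAt (deriv u) (w2 x) x := fun x hx =>
    (hw1d x hx).congr_of_eventuallyEq
      (Filter.eventuallyEq_of_mem (hI.mem_nhds hx) (fun z hz => (hu z hz).deriv))
  have hu3 : ∀ x ∈ I, HasDerivAt (deriv (deriv u)) (w3 x) x := fun x hx =>
    (hw2d x hx).congr_of_eventuallyEq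
      (Filter.eventuallyEq_of_mem (hI.mem_nhds hx) (fun z hz => (hu2 z hz).deriv))
  constructor
  · intro hE
    rcases Set.eq_empty_or_nonempty I with hIe | ⟨x₀, hx₀⟩
    · exact ⟨0, 0, 0, 0, by intro x hx; rw [hIe] at hx; exact absurd hx (Set.notMem_empty x)⟩
    · have hw3z : ∀ x ∈ I, w3 x = 0 := by
        intro x hx
        rw [hw3def]
        simp only [hE x hx, zero_div]
      set c2 := deriv (deriv u) x₀ with hc2def
      set c1 := deriv u x₀ with hc1def
      set c0 := u x₀ with hc0def
      set c := Real.log (y x₀) with hcdef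
      -- step 1 : deriv (deriv u) is constant c2 on I
      have step1 : Set.EqOn (deriv (deriv u)) (fun _ => c2) I := by
        apply eqOn_of_hasDerivAt_eq hI hconv (d := fun _ => (0 : ℝ))
          (fun x hx => by simpa [hw3z x hx] using hu3 x hx)
          (fun x hx => hasDerivAt_const x c2) hx₀ rfl
      -- step 2 : deriv u = c2 (x - x₀) + c1 on I
      have hdu : ∀ x ∈ I, HasDerivAt (deriv u) c2 x := by
        intro x hx
        have hval : w2 x = c2 := ((hu2 x hx).deriv).symm.trans (step1 hx)
        simpa [hval] using hu2 x hx
      set g1 : ℝ → ℝ := fun t => c2 * (t - x₀) + c1 with hg1def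
      have step2 : Set.EqOn (deriv u) g1 I := by
        apply eqOn_of_hasDerivAt_eq hI hconv (d := fun _ => c2) hdu
          (fun x hx => by
            simpa [hg1def] using (((hasDerivAt_id x).sub_const x₀).const_mul c2).add_const c1)
          hx₀ (by simp [hg1def, hc1def])
      -- step 3 : u = c2/2 (x-x₀)^2 + c1 (x-x₀) + c0 on I
      have hdu2 : ∀ x ∈ I, HasDerivAt u (g1 x) x := by
        intro x hx
        have hval : w1 x = g1 x := ((hu x hx).deriv).symm.trans (step2 hx)
        simpa [hval] using hu x hx
      set g2 : ℝ → ℝ := fun t => c2 / 2 * (t - x₀) ^ 2 + c1 * (t - x₀) + c0 with hg2def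
      have step3 : Set.EqOn u g2 I := by
        apply eqOn_of_hasDerivAt_eq hI hconv (d := g1) hdu2
          (fun x hx => by
            have := ((((hasDerivAt_id x).sub_const x₀).pow 2).const_mul (c2 / 2)).add
              ((((hasDerivAt_id x).sub_const x₀)).const_mul c1) |>.add_const c0
            refine HasDerivAt.congr_deriv this ?_
            simp [hg1def]
            ring)
          hx₀ (by simp [hg2def, hc0def])
      -- step 4 : log ∘ y = cubic on I
      have hdL : ∀ x ∈ I, HasDerivAt (fun t => Real.log (y t)) (g2 x) x := by
        intro x hx
        have := (hdy x hx).log (hne x hx)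
        have hval : y1 x / y x = g2 x := step3 hx
        rwa [hval] at this
      set g3 : ℝ → ℝ := fun t =>
        c2 / 6 * (t - x₀) ^ 3 + c1 / 2 * (t - x₀) ^ 2 + c0 * (t - x₀) + c with hg3def
      have step4 : Set.EqOn (fun t => Real.log (y t)) g3 I := by
        apply eqOn_of_hasDerivAt_eq hI hconv (d := g2) hdL
          (fun x hx => by
            have := (((((hasDerivAt_id x).sub_const x₀).pow 3).const_mul (c2 / 6)).add
              ((((hasDerivAt_id x).sub_const x₀).pow 2).const_mul (c1 / 2))).add
              ((((hasDerivAt_id x).sub_const x₀)).const_mul c0) |>.add_const c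
            refine HasDerivAt.congr_deriv this ?_
            simp [hg2def]
            ring)
          hx₀ (by simp [hg3def, hcdef])
      refine ⟨c - c0 * x₀ + c1 / 2 * x₀ ^ 2 - c2 / 6 * x₀ ^ 3,
        c0 - c1 * x₀ + c2 / 2 * x₀ ^ 2, c1 / 2 - c2 / 2 * x₀, c2 / 6, ?_⟩
      intro x hx
      have h1 : Real.log (y x) = g3 x := step4 hx
      rw [← Real.exp_log (hypos x hx), h1]
      congr 1
      simp only [hg3def]
      ring
  · rintro ⟨a₀, a₁, a₂, a₃, ha⟩ x hx
    set p : ℝ → ℝ := fun t => a₀ + a₁ * t + a₂ * t ^ 2 + a₃ * t ^ 3 with hpdef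
    set p1 : ℝ → ℝ := fun t => a₁ + 2 * a₂ * t + 3 * a₃ * t ^ 2 with hp1def
    have hpd : ∀ t : ℝ, HasDerivAt p (p1 t) t := by
      intro t
      have := ((((hasDerivAt_id t).const_mul a₁).const_add a₀).add
        (((hasDerivAt_id t).pow 2).const_mul a₂)).add (((hasDerivAt_id t).pow 3).const_mul a₃)
      refine HasDerivAt.congr_deriv this ?_
      simp [hp1def]
      ring
    have hPd : ∀ t : ℝ, HasDerivAt (fun s => Real.exp (p s)) (Real.exp (p t) * p1 t) t :=
      fun t => (hpd t).exp
    have hyev : ∀ z ∈ I, y =ᶠ[nhds z] fun s => Real.exp (p s) := fun z hz =>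
      Filter.eventuallyEq_of_mem (hI.mem_nhds hz) (fun w hw => ha w hw)
    have hy1eq : ∀ z ∈ I, y1 z = Real.exp (p z) * p1 z := by
      intro z hz
      exact ((hPd z).congr_of_eventuallyEq (hyev z hz)).deriv
    -- u = p1 on I
    have huP : Set.EqOn u p1 I := by
      intro z hz
      rw [hudef]
      simp only
      rw [hy1eq z hz, ha z hz]
      field_simp
      simp only [hpdef]
      ring_nf
    -- deriv u = p2 on I
    set p2 : ℝ → ℝ := fun t => 2 * a₂ + 6 * a₃ * t with hp2def
    have hp1d : ∀ t : ℝ, HasDerivAt p1 (p2 t) t := by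
      intro t
      have := (((hasDerivAt_id t).const_mul (2 * a₂)).const_add a₁).add
        (((hasDerivAt_id t).pow 2).const_mul (3 * a₃))
      refine HasDerivAt.congr_deriv this ?_
      simp [hp2def]
      ring
    have hud : ∀ z ∈ I, HasDerivAt u (p2 z) z := fun z hz =>
      (hp1d z).congr_of_eventuallyEq
        (Filter.eventuallyEq_of_mem (hI.mem_nhds hz) (fun w hw => huP hw))
    have hduP : Set.EqOn (deriv u) p2 I := fun z hz => (hud z hz).deriv
    have hu2d : ∀ z ∈ I, HasDerivAt (deriv u) (6 * a₃) z := fun z hz =>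
      (by simpa [hp2def] using ((hasDerivAt_id z).const_mul (6 * a₃)).const_add (2 * a₂) :
        HasDerivAt p2 (6 * a₃) z).congr_of_eventuallyEq
        (Filter.eventuallyEq_of_mem (hI.mem_nhds hz) (fun w hw => hduP hw))
    have hdu2P : Set.EqOn (deriv (deriv u)) (fun _ => 6 * a₃) I := fun z hz => (hu2d z hz).deriv
    have hu3d : HasDerivAt (deriv (deriv u)) 0 x :=
      (hasDerivAt_const x (6 * a₃)).congr_of_eventuallyEq
        (Filter.eventuallyEq_of_mem (hI.mem_nhds hx) (fun w hw => hdu2P hw))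
    have hzero : w3 x = 0 := ((hu3 x hx).deriv).symm.trans hu3d.deriv
    rw [hw3def] at hzero
    simp only at hzero
    rcases div_eq_zero_iff.mp hzero with h | h
    · exact h
    · exact absurd h (pow_ne_zero 4 (hne x hx))
end

section
/- Let φ : ℝ → ℝ be three times continuously differentiable with φ'(x) ≠ 0 for all x, and let ψ : ℝ³ → ℝ (written ψ(x,y,p)) be three times continuously differentiable with ∂ψ/∂p (x,y,p) ≠ 0 for all (x,y,p). Then there exist continuous functions A₀, B₃, B₂, B₁, B₀ : ℝ³ → ℝ with the following property: for every open interval I, every four times continuously differentiable y : I → ℝ, and every three times continuously differentiable u : ℝ → ℝ satisfying u(φ(x)) = ψ(x, y(x), y'(x)) for all x ∈ I, one has for all x ∈ I (all coefficient functions evaluated at (x, y(x), y'(x))): u'''(φ(x)) = (ψ_p / φ'(x)³) · [ y''''(x) + ( (3 ψ_pp/ψ_p) · y''(x) + A₀ ) · y'''(x) + B₃ · y''(x)³ + B₂ · y''(x)² + B₁ · y''(x) + B₀ ], where ψ_p and ψ_pp denote the first and second partial derivatives of ψ with respect to p. -/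
noncomputable section
open ContinuousLinearMap

abbrev E3 := ℝ × ℝ × ℝ

def e2v : E3 := (0, 1, 0)
def e3v : E3 := (0, 0, 1)
def mv (v : E3) : E3 := (1, v.2.2, 0)

def cC (y : ℝ → ℝ) (z : ℝ) : E3 := (z, y z, deriv y z)
def cV (y : ℝ → ℝ) (z : ℝ) : E3 := (1, deriv y z, deriv (deriv y) z)
def cW (y : ℝ → ℝ) (z : ℝ) : E3 := (0, deriv (deriv y) z, deriv (deriv (deriv y)) z)
def cX (y : ℝ → ℝ) (z : ℝ) : E3 :=
  (0, deriv (deriv (deriv y)) z, deriv (deriv (deriv (deriv y))) z)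

def G1 (ψ : E3 → ℝ) (y : ℝ → ℝ) (z : ℝ) : ℝ := fderiv ℝ ψ (cC y z) (cV y z)
def G2 (ψ : E3 → ℝ) (y : ℝ → ℝ) (z : ℝ) : ℝ :=
  fderiv ℝ (fderiv ℝ ψ) (cC y z) (cV y z) (cV y z) + fderiv ℝ ψ (cC y z) (cW y z)
def G3 (ψ : E3 → ℝ) (y : ℝ → ℝ) (z : ℝ) : ℝ :=
  fderiv ℝ (fderiv ℝ (fderiv ℝ ψ)) (cC y z) (cV y z) (cV y z) (cV y z)
    + fderiv ℝ (fderiv ℝ ψ) (cC y z) (cW y z) (cV y z)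
    + 2 * fderiv ℝ (fderiv ℝ ψ) (cC y z) (cV y z) (cW y z)
    + fderiv ℝ ψ (cC y z) (cX y z)


def Sc (φ : ℝ → ℝ) (v : E3) : ℝ := deriv (deriv φ) v.1 / deriv φ v.1
def Rc (φ : ℝ → ℝ) (v : E3) : ℝ := 3 * Sc φ v ^ 2 - deriv (deriv (deriv φ)) v.1 / deriv φ v.1
def Pc (ψ : E3 → ℝ) (v : E3) : ℝ := fderiv ℝ ψ v e3v

def cA0 (φ : ℝ → ℝ) (ψ : E3 → ℝ) (v : E3) : ℝ :=
  (fderiv ℝ (fderiv ℝ ψ) v e3v (mv v) + 2 * fderiv ℝ (fderiv ℝ ψ) v (mv v) e3v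
      + fderiv ℝ ψ v e2v) / Pc ψ v - 3 * Sc φ v
def cB3 (ψ : E3 → ℝ) (v : E3) : ℝ :=
  fderiv ℝ (fderiv ℝ (fderiv ℝ ψ)) v e3v e3v e3v / Pc ψ v
def cB2 (φ : ℝ → ℝ) (ψ : E3 → ℝ) (v : E3) : ℝ :=
  (fderiv ℝ (fderiv ℝ (fderiv ℝ ψ)) v (mv v) e3v e3v
      + fderiv ℝ (fderiv ℝ (fderiv ℝ ψ)) v e3v (mv v) e3v
      + fderiv ℝ (fderiv ℝ (fderiv ℝ ψ)) v e3v e3v (mv v)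
      + fderiv ℝ (fderiv ℝ ψ) v e2v e3v + 2 * fderiv ℝ (fderiv ℝ ψ) v e3v e2v
      - 3 * Sc φ v * fderiv ℝ (fderiv ℝ ψ) v e3v e3v) / Pc ψ v
def cB1 (φ : ℝ → ℝ) (ψ : E3 → ℝ) (v : E3) : ℝ :=
  (fderiv ℝ (fderiv ℝ (fderiv ℝ ψ)) v (mv v) (mv v) e3v
      + fderiv ℝ (fderiv ℝ (fderiv ℝ ψ)) v (mv v) e3v (mv v)
      + fderiv ℝ (fderiv ℝ (fderiv ℝ ψ)) v e3v (mv v) (mv v)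
      + fderiv ℝ (fderiv ℝ ψ) v e2v (mv v) + 2 * fderiv ℝ (fderiv ℝ ψ) v (mv v) e2v
      - 3 * Sc φ v * (fderiv ℝ (fderiv ℝ ψ) v (mv v) e3v
          + fderiv ℝ (fderiv ℝ ψ) v e3v (mv v) + fderiv ℝ ψ v e2v)
      + Rc φ v * Pc ψ v) / Pc ψ v
def cB0 (φ : ℝ → ℝ) (ψ : E3 → ℝ) (v : E3) : ℝ :=
  (fderiv ℝ (fderiv ℝ (fderiv ℝ ψ)) v (mv v) (mv v) (mv v)
      - 3 * Sc φ v * fderiv ℝ (fderiv ℝ ψ) v (mv v) (mv v)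
      + Rc φ v * fderiv ℝ ψ v (mv v)) / Pc ψ v

theorem master (φ : ℝ → ℝ) (hφ : ContDiff ℝ 3 φ) (ψ : E3 → ℝ) (hψ : ContDiff ℝ 3 ψ)
    (I : Set ℝ) (hI : IsOpen I) (y : ℝ → ℝ) (hy : ContDiffOn ℝ 4 y I)
    (u : ℝ → ℝ) (hu : ContDiff ℝ 3 u)
    (heq : ∀ z ∈ I, u (φ z) = ψ (z, y z, deriv y z)) (x : ℝ) (hx : x ∈ I) :
    deriv u (φ x) * deriv φ x = G1 ψ y x ∧
    deriv (deriv u) (φ x) * (deriv φ x) ^ 2 + deriv u (φ x) * deriv (deriv φ) x = G2 ψ y x ∧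
    deriv (deriv (deriv u)) (φ x) * (deriv φ x) ^ 3
      + 3 * deriv (deriv u) (φ x) * deriv φ x * deriv (deriv φ) x
      + deriv u (φ x) * deriv (deriv (deriv φ)) x = G3 ψ y x := by
  -- regularity of φ
  have hφd : Differentiable ℝ φ := hφ.differentiable (by norm_num)
  have hφ1 : ContDiff ℝ 2 (deriv φ) := by
    have h := (contDiff_succ_iff_deriv (n := 2) (f := φ)).mp (by exact_mod_cast hφ)
    exact h.2.2
  have hφ2 : ContDiff ℝ 1 (deriv (deriv φ)) := by
    have h := (contDiff_succ_iff_deriv (n := 1) (f := deriv φ)).mp (by exact_mod_cast hφ1)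
    exact h.2.2
  have hφ1d : Differentiable ℝ (deriv φ) := hφ1.differentiable (by norm_num)
  have hφ2d : Differentiable ℝ (deriv (deriv φ)) := hφ2.differentiable (by norm_num)
  -- regularity of u
  have hud : Differentiable ℝ u := hu.differentiable (by norm_num)
  have hu1 : ContDiff ℝ 2 (deriv u) := by
    have h := (contDiff_succ_iff_deriv (n := 2) (f := u)).mp (by exact_mod_cast hu)
    exact h.2.2
  have hu2 : ContDiff ℝ 1 (deriv (deriv u)) := by
    have h := (contDiff_succ_iff_deriv (n := 1) (f := deriv u)).mp (by exact_mod_cast hu1)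
    exact h.2.2
  have hu1d : Differentiable ℝ (deriv u) := hu1.differentiable (by norm_num)
  have hu2d : Differentiable ℝ (deriv (deriv u)) := hu2.differentiable (by norm_num)
  -- regularity of ψ
  have hψd : Differentiable ℝ ψ := hψ.differentiable (by norm_num)
  have hL : ContDiff ℝ 2 (fderiv ℝ ψ) :=
    hψ.fderiv_right (by norm_num : (2 : WithTop ℕ∞) + 1 ≤ 3)
  have hLd : Differentiable ℝ (fderiv ℝ ψ) := hL.differentiable (by norm_num)
  have hQ : ContDiff ℝ 1 (fderiv ℝ (fderiv ℝ ψ)) :=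
    hL.fderiv_right (by norm_num : (1 : WithTop ℕ∞) + 1 ≤ 2)
  have hQd : Differentiable ℝ (fderiv ℝ (fderiv ℝ ψ)) := hQ.differentiable (by norm_num)
  -- derivatives of y on I
  have hyd : ∀ z ∈ I, HasDerivAt y (deriv y z) z := fun z hz =>
    ((hy.differentiableOn (by norm_num)).differentiableAt (hI.mem_nhds hz)).hasDerivAt
  have hy1 : ContDiffOn ℝ 3 (deriv y) I := hy.deriv_of_isOpen hI (by norm_num)
  have hy2 : ContDiffOn ℝ 2 (deriv (deriv y)) I := hy1.deriv_of_isOpen hI (by norm_num)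
  have hy3 : ContDiffOn ℝ 1 (deriv (deriv (deriv y))) I := hy2.deriv_of_isOpen hI (by norm_num)
  have hyd1 : ∀ z ∈ I, HasDerivAt (deriv y) (deriv (deriv y) z) z := fun z hz =>
    ((hy1.differentiableOn (by norm_num)).differentiableAt (hI.mem_nhds hz)).hasDerivAt
  have hyd2 : ∀ z ∈ I, HasDerivAt (deriv (deriv y)) (deriv (deriv (deriv y)) z) z := fun z hz =>
    ((hy2.differentiableOn (by norm_num)).differentiableAt (hI.mem_nhds hz)).hasDerivAt
  have hyd3 : ∀ z ∈ I,
      HasDerivAt (deriv (deriv (deriv y))) (deriv (deriv (deriv (deriv y))) z) z := fun z hz =>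
    ((hy3.differentiableOn (by norm_num)).differentiableAt (hI.mem_nhds hz)).hasDerivAt
  -- curve derivatives
  have hc : ∀ z ∈ I, HasDerivAt (cC y) (cV y z) z := fun z hz =>
    (hasDerivAt_id z).prodMk ((hyd z hz).prodMk (hyd1 z hz))
  have hcv : ∀ z ∈ I, HasDerivAt (cV y) (cW y z) z := fun z hz =>
    (hasDerivAt_const _ _).prodMk ((hyd1 z hz).prodMk (hyd2 z hz))
  have hcw : ∀ z ∈ I, HasDerivAt (cW y) (cX y z) z := fun z hz =>
    (hasDerivAt_const _ _).prodMk ((hyd2 z hz).prodMk (hyd3 z hz))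
  -- eventual equality
  have hev : ∀ z ∈ I, (fun w => u (φ w)) =ᶠ[nhds z] (fun w => ψ (cC y w)) := fun z hz =>
    Filter.eventually_of_mem (hI.mem_nhds hz) (fun w hw => by simpa [cC] using heq w hw)
  -- level 1
  have hW1 : ∀ z, HasDerivAt (fun w => u (φ w)) (deriv u (φ z) * deriv φ z) z := fun z =>
    HasDerivAt.comp z (hud (φ z)).hasDerivAt (hφd z).hasDerivAt
  have hG1 : ∀ z ∈ I, HasDerivAt (fun w => ψ (cC y w)) (G1 ψ y z) z := fun z hz =>
    (hψd (cC y z)).hasFDerivAt.comp_hasDerivAt z (hc z hz)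
  have e1 : ∀ z ∈ I, deriv u (φ z) * deriv φ z = G1 ψ y z := fun z hz =>
    ((hW1 z).congr_of_eventuallyEq (hev z hz).symm).unique (hG1 z hz)
  -- level 2
  have hW2 : ∀ z, HasDerivAt (fun w => deriv u (φ w) * deriv φ w)
      (deriv (deriv u) (φ z) * (deriv φ z) ^ 2 + deriv u (φ z) * deriv (deriv φ) z) z := by
    intro z
    have h := (HasDerivAt.comp z (hu1d (φ z)).hasDerivAt (hφd z).hasDerivAt).mul
      (hφ1d z).hasDerivAt
    refine h.congr_deriv ?_
    simp only [Function.comp_apply]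
    ring
  have hDc : ∀ z ∈ I, HasDerivAt (fun w => fderiv ℝ ψ (cC y w))
      (fderiv ℝ (fderiv ℝ ψ) (cC y z) (cV y z)) z := fun z hz =>
    (hLd (cC y z)).hasFDerivAt.comp_hasDerivAt z (hc z hz)
  have hG2 : ∀ z ∈ I, HasDerivAt (G1 ψ y) (G2 ψ y z) z := fun z hz =>
    (hDc z hz).clm_apply (hcv z hz)
  have e2 : ∀ z ∈ I,
      deriv (deriv u) (φ z) * (deriv φ z) ^ 2 + deriv u (φ z) * deriv (deriv φ) z
        = G2 ψ y z := by
    intro z hz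
    have hev1 : G1 ψ y =ᶠ[nhds z] (fun w => deriv u (φ w) * deriv φ w) :=
      Filter.eventually_of_mem (hI.mem_nhds hz) (fun w hw => (e1 w hw).symm)
    exact ((hW2 z).congr_of_eventuallyEq hev1).unique (hG2 z hz)
  -- level 3
  have hW3 : HasDerivAt (fun w => deriv (deriv u) (φ w) * (deriv φ w) ^ 2
        + deriv u (φ w) * deriv (deriv φ) w)
      (deriv (deriv (deriv u)) (φ x) * (deriv φ x) ^ 3
        + 3 * deriv (deriv u) (φ x) * deriv φ x * deriv (deriv φ) x
        + deriv u (φ x) * deriv (deriv (deriv φ)) x) x := by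
    have h := ((HasDerivAt.comp x (hu2d (φ x)).hasDerivAt (hφd x).hasDerivAt).mul
        ((hφ1d x).hasDerivAt.pow 2)).add
      ((HasDerivAt.comp x (hu1d (φ x)).hasDerivAt (hφd x).hasDerivAt).mul
        (hφ2d x).hasDerivAt)
    refine h.congr_deriv ?_
    simp only [Function.comp_apply, Pi.pow_apply]
    ring
  have hQc : HasDerivAt (fun w => fderiv ℝ (fderiv ℝ ψ) (cC y w))
      (fderiv ℝ (fderiv ℝ (fderiv ℝ ψ)) (cC y x) (cV y x)) x :=
    (hQd (cC y x)).hasFDerivAt.comp_hasDerivAt (l := fderiv ℝ (fderiv ℝ ψ)) x (hc x hx)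
  have hA : HasDerivAt (fun w => fderiv ℝ (fderiv ℝ ψ) (cC y w) (cV y w) (cV y w))
      ((fderiv ℝ (fderiv ℝ (fderiv ℝ ψ)) (cC y x) (cV y x) (cV y x)
          + fderiv ℝ (fderiv ℝ ψ) (cC y x) (cW y x)) (cV y x)
        + fderiv ℝ (fderiv ℝ ψ) (cC y x) (cV y x) (cW y x)) x :=
    (hQc.clm_apply (hcv x hx)).clm_apply (hcv x hx)
  have hB : HasDerivAt (fun w => fderiv ℝ ψ (cC y w) (cW y w))
      (fderiv ℝ (fderiv ℝ ψ) (cC y x) (cV y x) (cW y x)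
        + fderiv ℝ ψ (cC y x) (cX y x)) x :=
    (hDc x hx).clm_apply (hcw x hx)
  have hG3 : HasDerivAt (G2 ψ y) (G3 ψ y x) x := by
    have h := hA.add hB
    refine h.congr_deriv ?_
    simp only [G3, ContinuousLinearMap.add_apply]
    ring
  have e3 : deriv (deriv (deriv u)) (φ x) * (deriv φ x) ^ 3
      + 3 * deriv (deriv u) (φ x) * deriv φ x * deriv (deriv φ) x
      + deriv u (φ x) * deriv (deriv (deriv φ)) x = G3 ψ y x := by
    have hev2 : G2 ψ y =ᶠ[nhds x] (fun w => deriv (deriv u) (φ w) * (deriv φ w) ^ 2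
        + deriv u (φ w) * deriv (deriv φ) w) :=
      Filter.eventually_of_mem (hI.mem_nhds hx) (fun w hw => (e2 w hw).symm)
    exact (hW3.congr_of_eventuallyEq hev2).unique hG3
  exact ⟨e1 x hx, e2 x hx, e3⟩


theorem psip_eq (ψ : E3 → ℝ) (hψ : ContDiff ℝ 3 ψ) (x y p : ℝ) :
    deriv (fun q => ψ (x, y, q)) p = fderiv ℝ ψ (x, y, p) e3v := by
  have hc : HasDerivAt (fun q : ℝ => ((x, y, q) : E3)) e3v p :=
    (hasDerivAt_const _ _).prodMk ((hasDerivAt_const _ _).prodMk (hasDerivAt_id _))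
  have hD : HasFDerivAt ψ (fderiv ℝ ψ (x, y, p)) (x, y, p) :=
    (hψ.differentiable (by norm_num) _).hasFDerivAt
  exact (hD.comp_hasDerivAt p hc).deriv

theorem psipp_eq (ψ : E3 → ℝ) (hψ : ContDiff ℝ 3 ψ) (x y p : ℝ) :
    deriv (deriv (fun q => ψ (x, y, q))) p
      = fderiv ℝ (fderiv ℝ ψ) (x, y, p) e3v e3v := by
  have h1 : deriv (fun q => ψ (x, y, q)) = fun q => fderiv ℝ ψ (x, y, q) e3v :=
    funext fun q => psip_eq ψ hψ x y q
  rw [h1]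
  have hc : HasDerivAt (fun q : ℝ => ((x, y, q) : E3)) e3v p :=
    (hasDerivAt_const _ _).prodMk ((hasDerivAt_const _ _).prodMk (hasDerivAt_id _))
  have hD : HasFDerivAt (fderiv ℝ ψ) (fderiv ℝ (fderiv ℝ ψ) (x, y, p)) (x, y, p) :=
    ((hψ.fderiv_right (by norm_num : (2:WithTop ℕ∞) + 1 ≤ 3)).differentiable
      (by norm_num) _).hasFDerivAt
  have h2 : HasDerivAt (fun q : ℝ => fderiv ℝ ψ (x, y, q))
      (fderiv ℝ (fderiv ℝ ψ) (x, y, p) e3v) p := hD.comp_hasDerivAt p hc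
  have h3 := h2.clm_apply (hasDerivAt_const p e3v)
  simpa using h3.deriv

end

set_option maxHeartbeats 2000000 in
/-- Fiber-preserving case of Theorem 1 / equation (8) of the paper: the pullback of `u''' = 0`
under the tangent transformation `t = φ(x)`, `u = ψ(x, y, y')` has the form
`y'''' + (A₁ y'' + A₀) y''' + B₃ (y'')³ + B₂ (y'')² + B₁ y'' + B₀ = 0` with
leading factor `ψ_p/φ'³` and `A₁ = 3 ψ_pp/ψ_p`. -/
theorem stmt_6 (φ : ℝ → ℝ) (hφ : ContDiff ℝ 3 φ) (hφ' : ∀ x : ℝ, deriv φ x ≠ 0)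
    (ψ : ℝ × ℝ × ℝ → ℝ) (hψ : ContDiff ℝ 3 ψ)
    (hψp : ∀ v : ℝ × ℝ × ℝ, deriv (fun p => ψ (v.1, v.2.1, p)) v.2.2 ≠ 0) :
    ∃ A₀ B₃ B₂ B₁ B₀ : ℝ × ℝ × ℝ → ℝ,
      Continuous A₀ ∧ Continuous B₃ ∧ Continuous B₂ ∧ Continuous B₁ ∧ Continuous B₀ ∧
      ∀ (I : Set ℝ), IsOpen I → IsPreconnected I →
        ∀ (y : ℝ → ℝ), ContDiffOn ℝ 4 y I →
          ∀ (u : ℝ → ℝ), ContDiff ℝ 3 u →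
            (∀ x ∈ I, u (φ x) = ψ (x, y x, deriv y x)) →
            ∀ x ∈ I,
              deriv (deriv (deriv u)) (φ x) =
                (deriv (fun p => ψ (x, y x, p)) (deriv y x) / (deriv φ x) ^ 3) *
                  (deriv (deriv (deriv (deriv y))) x
                    + ((3 * deriv (deriv (fun p => ψ (x, y x, p))) (deriv y x)
                          / deriv (fun p => ψ (x, y x, p)) (deriv y x))
                          * deriv (deriv y) x
                        + A₀ (x, y x, deriv y x)) * deriv (deriv (deriv y)) x
                    + B₃ (x, y x, deriv y x) * (deriv (deriv y) x) ^ 3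
                    + B₂ (x, y x, deriv y x) * (deriv (deriv y) x) ^ 2
                    + B₁ (x, y x, deriv y x) * deriv (deriv y) x
                    + B₀ (x, y x, deriv y x)) := by
  -- nonvanishing of ψ_p in fderiv form
  have hP : ∀ v : E3, fderiv ℝ ψ v e3v ≠ 0 := by
    intro v
    have h := hψp v
    rw [psip_eq ψ hψ v.1 v.2.1 v.2.2] at h
    simpa using h
  -- continuity facts
  have hφ1 : ContDiff ℝ 2 (deriv φ) := by
    have h := (contDiff_succ_iff_deriv (n := 2) (f := φ)).mp (by exact_mod_cast hφ)
    exact h.2.2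
  have hφ2 : ContDiff ℝ 1 (deriv (deriv φ)) := by
    have h := (contDiff_succ_iff_deriv (n := 1) (f := deriv φ)).mp (by exact_mod_cast hφ1)
    exact h.2.2
  have hφ1c : Continuous (deriv φ) := hφ1.continuous
  have hφ2c : Continuous (deriv (deriv φ)) := hφ2.continuous
  have hφ3c : Continuous (deriv (deriv (deriv φ))) := hφ2.continuous_deriv le_rfl
  have hL : ContDiff ℝ 2 (fderiv ℝ ψ) :=
    hψ.fderiv_right (by norm_num : (2 : WithTop ℕ∞) + 1 ≤ 3)
  have hQ : ContDiff ℝ 1 (fderiv ℝ (fderiv ℝ ψ)) :=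
    hL.fderiv_right (by norm_num : (1 : WithTop ℕ∞) + 1 ≤ 2)
  have hLc : Continuous (fderiv ℝ ψ) := hL.continuous
  have hQc : Continuous (fderiv ℝ (fderiv ℝ ψ)) := hQ.continuous
  have hTc := hQ.continuous_fderiv_apply one_ne_zero
  have hmv : Continuous mv := by unfold mv; fun_prop
  have hScont : Continuous (Sc φ) := by
    exact (hφ2c.comp continuous_fst).div (hφ1c.comp continuous_fst) fun v => hφ' v.1
  have hRcont : Continuous (Rc φ) := by
    exact ((continuous_const.mul (hScont.pow 2)).sub
      ((hφ3c.comp continuous_fst).div (hφ1c.comp continuous_fst) fun v => hφ' v.1))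
  have hPcont : Continuous (Pc ψ) := hLc.clm_apply continuous_const
  -- applications continuity helpers
  have hL_m : Continuous fun v => fderiv ℝ ψ v (mv v) := hLc.clm_apply hmv
  have hL_2 : Continuous fun v => fderiv ℝ ψ v e2v := hLc.clm_apply continuous_const
  have hQ_ap : ∀ (a b : E3 → E3), Continuous a → Continuous b →
      Continuous fun v => fderiv ℝ (fderiv ℝ ψ) v (a v) (b v) := fun a b ha hb =>
    (hQc.clm_apply ha).clm_apply hb
  have hT_ap : ∀ (a b c : E3 → E3), Continuous a → Continuous b → Continuous c →
      Continuous fun v => fderiv ℝ (fderiv ℝ (fderiv ℝ ψ)) v (a v) (b v) (c v) :=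
    fun a b c ha hb hc => ((hTc.comp (continuous_id.prodMk ha)).clm_apply hb).clm_apply hc
  have hcst : Continuous fun _ : E3 => e2v := continuous_const
  have hcst3 : Continuous fun _ : E3 => e3v := continuous_const
  refine ⟨cA0 φ ψ, cB3 ψ, cB2 φ ψ, cB1 φ ψ, cB0 φ ψ, ?_, ?_, ?_, ?_, ?_, ?_⟩
  · unfold cA0
    exact ((((hQ_ap _ _ hcst3 hmv).add (continuous_const.mul (hQ_ap _ _ hmv hcst3))).add
      hL_2).div hPcont hP).sub (continuous_const.mul hScont)
  · unfold cB3
    exact (hT_ap _ _ _ hcst3 hcst3 hcst3).div hPcont hP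
  · unfold cB2
    exact ((((((hT_ap _ _ _ hmv hcst3 hcst3).add (hT_ap _ _ _ hcst3 hmv hcst3)).add
      (hT_ap _ _ _ hcst3 hcst3 hmv)).add (hQ_ap _ _ hcst hcst3)).add
      (continuous_const.mul (hQ_ap _ _ hcst3 hcst))).sub
      ((continuous_const.mul hScont).mul (hQ_ap _ _ hcst3 hcst3))).div hPcont hP
  · unfold cB1
    exact (((((((hT_ap _ _ _ hmv hmv hcst3).add (hT_ap _ _ _ hmv hcst3 hmv)).add
      (hT_ap _ _ _ hcst3 hmv hmv)).add (hQ_ap _ _ hcst hmv)).add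
      (continuous_const.mul (hQ_ap _ _ hmv hcst))).sub
      ((continuous_const.mul hScont).mul
        (((hQ_ap _ _ hmv hcst3).add (hQ_ap _ _ hcst3 hmv)).add hL_2))).add
      (hRcont.mul hPcont)).div hPcont hP
  · unfold cB0
    exact (((hT_ap _ _ _ hmv hmv hmv).sub
      ((continuous_const.mul hScont).mul (hQ_ap _ _ hmv hmv))).add
      (hRcont.mul hL_m)).div hPcont hP
  intro I hI _hconn y hy u hu heq x hx
  obtain ⟨e1, e2, e3⟩ := master φ hφ ψ hψ I hI y hy u hu heq x hx
  have hφx := hφ' x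
  have hPx : fderiv ℝ ψ (x, y x, deriv y x) e3v ≠ 0 := hP _
  -- solve for u-derivatives
  have h1 : deriv u (φ x) = G1 ψ y x / deriv φ x := (eq_div_iff hφx).mpr e1
  have h2 : deriv (deriv u) (φ x)
      = (G2 ψ y x - deriv u (φ x) * deriv (deriv φ) x) / (deriv φ x) ^ 2 := by
    rw [eq_div_iff (pow_ne_zero 2 hφx)]; linarith
  have h3 : deriv (deriv (deriv u)) (φ x)
      = (G3 ψ y x - 3 * deriv (deriv u) (φ x) * deriv φ x * deriv (deriv φ) x
          - deriv u (φ x) * deriv (deriv (deriv φ)) x) / (deriv φ x) ^ 3 := by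
    rw [eq_div_iff (pow_ne_zero 3 hφx)]; linarith
  rw [psip_eq ψ hψ x (y x) (deriv y x), psipp_eq ψ hψ x (y x) (deriv y x), h3, h2, h1]
  -- expand the multilinear quantities
  have hVsum : cV y x = mv (cC y x) + deriv (deriv y) x • e3v := by
    simp [cV, mv, cC, e3v, Prod.ext_iff]
  have hWsum : cW y x = deriv (deriv y) x • e2v + deriv (deriv (deriv y)) x • e3v := by
    simp [cW, e2v, e3v, Prod.ext_iff]
  have hXsum : cX y x
      = deriv (deriv (deriv y)) x • e2v + deriv (deriv (deriv (deriv y))) x • e3v := by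
    simp [cX, e2v, e3v, Prod.ext_iff]
  have hmc : mv (cC y x) = ((1 : ℝ), deriv y x, (0 : ℝ)) := by simp [mv, cC]
  have hcc : cC y x = (x, y x, deriv y x) := rfl
  simp only [G1, G2, G3, hVsum, hWsum, hXsum, hmc, hcc, map_add, map_smul,
    ContinuousLinearMap.add_apply, ContinuousLinearMap.smul_apply, smul_eq_mul,
    cA0, cB3, cB2, cB1, cB0, Sc, Rc, Pc, mv]
  field_simp
  ring
end

section
/- Let φ : ℝ² → ℝ (written φ(x,y)) be four times continuously differentiable and ψ : ℝ³ → ℝ (written ψ(x,y,p)) be four times continuously differentiable. Assume that for all (x,y,p): φ_x(x,y) + p·φ_y(x,y) ≠ 0 and ψ_p(x,y,p) ≠ 0. Then there exist continuous functions A₁, A₀, B₃, B₂, B₁, B₀ : ℝ³ → ℝ and a continuous nowhere-vanishing function c : ℝ³ → ℝ with the following property: for every open interval I, every four times continuously differentiable y : I → ℝ, and every three times continuously differentiable u : ℝ → ℝ satisfying u(φ(x, y(x))) = ψ(x, y(x), y'(x)) for all x ∈ I, one has for all x ∈ I (all coefficient functions evaluated at (x, y(x), y'(x))): u'''(φ(x,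 y(x))) = c · [ y''''(x) + (A₁·y''(x) + A₀)·y'''(x) + B₃·y''(x)³ + B₂·y''(x)² + B₁·y''(x) + B₀ ]. -/
open Filter

lemma lin3 (L : (ℝ × ℝ × ℝ) →L[ℝ] ℝ) (a b c : ℝ) :
    L (a, b, c) = a * L (1,0,0) + b * L (0,1,0) + c * L (0,0,1) := by
  have h : ((a, b, c) : ℝ × ℝ × ℝ) = a • ((1:ℝ),(0:ℝ),(0:ℝ)) + b • (0,1,0) + c • (0,0,1) := by
    simp [Prod.ext_iff]
  rw [h, map_add, map_add, map_smul, map_smul, map_smul, smul_eq_mul, smul_eq_mul, smul_eq_mul]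

lemma lin2 (L : (ℝ × ℝ) →L[ℝ] ℝ) (a b : ℝ) :
    L (a, b) = a * L (1,0) + b * L (0,1) := by
  have h : ((a, b) : ℝ × ℝ) = a • ((1:ℝ),(0:ℝ)) + b • (0,1) := by simp [Prod.ext_iff]
  rw [h, map_add, map_smul, map_smul, smul_eq_mul, smul_eq_mul]

lemma hasDerivAt_comp_curve3 (f : ℝ × ℝ × ℝ → ℝ) (g h : ℝ → ℝ) (x g' h' : ℝ)
    (hf : DifferentiableAt ℝ f (x, g x, h x)) (hg : HasDerivAt g g' x)
    (hh : HasDerivAt h h' x) :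
    HasDerivAt (fun t => f (t, g t, h t))
      (fderiv ℝ f (x, g x, h x) (1,0,0) + g' * fderiv ℝ f (x, g x, h x) (0,1,0)
        + h' * fderiv ℝ f (x, g x, h x) (0,0,1)) x := by
  have hc : HasDerivAt (fun t => (t, g t, h t)) ((1:ℝ), g', h') x :=
    (hasDerivAt_id x).prodMk (hg.prodMk hh)
  have := hf.hasFDerivAt.comp_hasDerivAt x hc
  simpa [Function.comp_def, lin3 _ 1 g' h'] using this

lemma hasDerivAt_comp_curve2 (f : ℝ × ℝ → ℝ) (g : ℝ → ℝ) (x g' : ℝ)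
    (hf : DifferentiableAt ℝ f (x, g x)) (hg : HasDerivAt g g' x) :
    HasDerivAt (fun t => f (t, g t))
      (fderiv ℝ f (x, g x) (1,0) + g' * fderiv ℝ f (x, g x) (0,1)) x := by
  have hc : HasDerivAt (fun t => (t, g t)) ((1:ℝ), g') x := (hasDerivAt_id x).prodMk hg
  have := hf.hasFDerivAt.comp_hasDerivAt x hc
  simpa [Function.comp_def, lin2 _ 1 g'] using this

-- deriv of partial application relation
lemma deriv_partial1 (f : ℝ × ℝ → ℝ) (hf : DifferentiableAt ℝ f (a, b)) :
    deriv (fun t => f (t, b)) a = fderiv ℝ f (a, b) (1, 0) := by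
  have hc : HasDerivAt (fun t => ((t : ℝ), b)) ((1:ℝ), (0:ℝ)) a :=
    (hasDerivAt_id a).prodMk (hasDerivAt_const a b)
  have := hf.hasFDerivAt.comp_hasDerivAt a hc
  simpa [Function.comp_def] using this.deriv

lemma deriv_partial2 (f : ℝ × ℝ → ℝ) (hf : DifferentiableAt ℝ f (a, b)) :
    deriv (fun t => f (a, t)) b = fderiv ℝ f (a, b) (0, 1) := by
  have hc : HasDerivAt (fun t => (a, (t : ℝ))) ((0:ℝ), (1:ℝ)) b :=
    (hasDerivAt_const b a).prodMk (hasDerivAt_id b)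
  have := hf.hasFDerivAt.comp_hasDerivAt b hc
  simpa [Function.comp_def] using this.deriv

lemma deriv_partial3' (f : ℝ × ℝ × ℝ → ℝ) (hf : DifferentiableAt ℝ f (a, b, c)) :
    deriv (fun t => f (a, b, t)) c = fderiv ℝ f (a, b, c) (0, 0, 1) := by
  have hc : HasDerivAt (fun t => (a, b, (t : ℝ))) ((0:ℝ), (0:ℝ), (1:ℝ)) c :=
    (hasDerivAt_const c a).prodMk ((hasDerivAt_const c b).prodMk (hasDerivAt_id c))
  have := hf.hasFDerivAt.comp_hasDerivAt c hc
  simpa [Function.comp_def] using this.deriv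

open Filter

noncomputable section TangentAux

/-- partial derivative in the first slot -/
def Px (f : ℝ × ℝ × ℝ → ℝ) : ℝ × ℝ × ℝ → ℝ := fun v => fderiv ℝ f v (1, 0, 0)
/-- partial derivative in the second slot -/
def Py (f : ℝ × ℝ × ℝ → ℝ) : ℝ × ℝ × ℝ → ℝ := fun v => fderiv ℝ f v (0, 1, 0)
/-- partial derivative in the third slot -/
def Pz (f : ℝ × ℝ × ℝ → ℝ) : ℝ × ℝ × ℝ → ℝ := fun v => fderiv ℝ f v (0, 0, 1)

/-- `φ_x + p φ_y` -/
def KK (φ : ℝ × ℝ → ℝ) : ℝ × ℝ × ℝ → ℝ :=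
  fun v => fderiv ℝ φ (v.1, v.2.1) (1, 0) + v.2.2 * fderiv ℝ φ (v.1, v.2.1) (0, 1)

def aa (φ : ℝ × ℝ → ℝ) (ψ : ℝ × ℝ × ℝ → ℝ) : ℝ × ℝ × ℝ → ℝ :=
  fun v => Pz ψ v / KK φ v

def bb (φ : ℝ × ℝ → ℝ) (ψ : ℝ × ℝ × ℝ → ℝ) : ℝ × ℝ × ℝ → ℝ :=
  fun v => (Px ψ v + v.2.2 * Py ψ v) / KK φ v

def AL (φ : ℝ × ℝ → ℝ) (ψ : ℝ × ℝ × ℝ → ℝ) : ℝ × ℝ × ℝ → ℝ :=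
  fun v => aa φ ψ v / KK φ v

def BE (φ : ℝ × ℝ → ℝ) (ψ : ℝ × ℝ × ℝ → ℝ) : ℝ × ℝ × ℝ → ℝ :=
  fun v => Pz (aa φ ψ) v / KK φ v

def GA (φ : ℝ × ℝ → ℝ) (ψ : ℝ × ℝ × ℝ → ℝ) : ℝ × ℝ × ℝ → ℝ :=
  fun v => (Px (aa φ ψ) v + v.2.2 * Py (aa φ ψ) v + Pz (bb φ ψ) v) / KK φ v

def DE (φ : ℝ × ℝ → ℝ) (ψ : ℝ × ℝ × ℝ → ℝ) : ℝ × ℝ × ℝ → ℝ :=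
  fun v => (Px (bb φ ψ) v + v.2.2 * Py (bb φ ψ) v) / KK φ v

lemma contDiff_Px {f : ℝ × ℝ × ℝ → ℝ} {m n : WithTop ℕ∞} (hf : ContDiff ℝ n f)
    (h : m + 1 ≤ n) : ContDiff ℝ m (Px f) :=
  (hf.fderiv_right h).clm_apply contDiff_const

lemma contDiff_Py {f : ℝ × ℝ × ℝ → ℝ} {m n : WithTop ℕ∞} (hf : ContDiff ℝ n f)
    (h : m + 1 ≤ n) : ContDiff ℝ m (Py f) :=
  (hf.fderiv_right h).clm_apply contDiff_const

lemma contDiff_Pz {f : ℝ × ℝ × ℝ → ℝ} {m n : WithTop ℕ∞} (hf : ContDiff ℝ n f)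
    (h : m + 1 ≤ n) : ContDiff ℝ m (Pz f) :=
  (hf.fderiv_right h).clm_apply contDiff_const

lemma contDiff_KK {φ : ℝ × ℝ → ℝ} (hφ : ContDiff ℝ 4 φ) : ContDiff ℝ 3 (KK φ) := by
  have hπ : ContDiff ℝ 3 (fun v : ℝ × ℝ × ℝ => (v.1, v.2.1)) :=
    contDiff_fst.prodMk (contDiff_fst.comp contDiff_snd)
  have hφ' : ContDiff ℝ 3 (fderiv ℝ φ) := hφ.fderiv_right (by norm_num)
  exact (((hφ'.comp hπ).clm_apply contDiff_const).add
    ((contDiff_snd.comp contDiff_snd).mul ((hφ'.comp hπ).clm_apply contDiff_const)))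

end TangentAux

section TangentAux2

lemma contDiff_aa {φ : ℝ × ℝ → ℝ} {ψ : ℝ × ℝ × ℝ → ℝ} (hφ : ContDiff ℝ 4 φ)
    (hψ : ContDiff ℝ 4 ψ) (hK : ∀ v, KK φ v ≠ 0) : ContDiff ℝ 3 (aa φ ψ) :=
  (contDiff_Pz hψ (by norm_num)).div (contDiff_KK hφ) hK

lemma contDiff_bb {φ : ℝ × ℝ → ℝ} {ψ : ℝ × ℝ × ℝ → ℝ} (hφ : ContDiff ℝ 4 φ)
    (hψ : ContDiff ℝ 4 ψ) (hK : ∀ v, KK φ v ≠ 0) : ContDiff ℝ 3 (bb φ ψ) :=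
  ((contDiff_Px hψ (by norm_num)).add
    ((contDiff_snd.comp contDiff_snd).mul (contDiff_Py hψ (by norm_num)))).div
    (contDiff_KK hφ) hK

lemma contDiff_AL {φ : ℝ × ℝ → ℝ} {ψ : ℝ × ℝ × ℝ → ℝ} (hφ : ContDiff ℝ 4 φ)
    (hψ : ContDiff ℝ 4 ψ) (hK : ∀ v, KK φ v ≠ 0) : ContDiff ℝ 3 (AL φ ψ) :=
  (contDiff_aa hφ hψ hK).div (contDiff_KK hφ) hK

lemma contDiff_BE {φ : ℝ × ℝ → ℝ} {ψ : ℝ × ℝ × ℝ → ℝ} (hφ : ContDiff ℝ 4 φ)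
    (hψ : ContDiff ℝ 4 ψ) (hK : ∀ v, KK φ v ≠ 0) : ContDiff ℝ 2 (BE φ ψ) :=
  (contDiff_Pz (contDiff_aa hφ hψ hK) (by norm_num)).div
    ((contDiff_KK hφ).of_le (by norm_num)) hK

lemma contDiff_GA {φ : ℝ × ℝ → ℝ} {ψ : ℝ × ℝ × ℝ → ℝ} (hφ : ContDiff ℝ 4 φ)
    (hψ : ContDiff ℝ 4 ψ) (hK : ∀ v, KK φ v ≠ 0) : ContDiff ℝ 2 (GA φ ψ) :=
  (((contDiff_Px (contDiff_aa hφ hψ hK) (by norm_num)).add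
      ((contDiff_snd.comp contDiff_snd).mul
        (contDiff_Py (contDiff_aa hφ hψ hK) (by norm_num)))).add
    (contDiff_Pz (contDiff_bb hφ hψ hK) (by norm_num))).div
    ((contDiff_KK hφ).of_le (by norm_num)) hK

lemma contDiff_DE {φ : ℝ × ℝ → ℝ} {ψ : ℝ × ℝ × ℝ → ℝ} (hφ : ContDiff ℝ 4 φ)
    (hψ : ContDiff ℝ 4 ψ) (hK : ∀ v, KK φ v ≠ 0) : ContDiff ℝ 2 (DE φ ψ) :=
  ((contDiff_Px (contDiff_bb hφ hψ hK) (by norm_num)).add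
    ((contDiff_snd.comp contDiff_snd).mul
      (contDiff_Py (contDiff_bb hφ hψ hK) (by norm_num)))).div
    ((contDiff_KK hφ).of_le (by norm_num)) hK

lemma hasDerivAt_curve (f : ℝ × ℝ × ℝ → ℝ) (y : ℝ → ℝ) (x : ℝ)
    (hf : DifferentiableAt ℝ f (x, y x, deriv y x)) (hy : HasDerivAt y (deriv y x) x)
    (hy' : HasDerivAt (deriv y) (deriv (deriv y) x) x) :
    HasDerivAt (fun t => f (t, y t, deriv y t))
      (Px f (x, y x, deriv y x) + deriv y x * Py f (x, y x, deriv y x)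
        + deriv (deriv y) x * Pz f (x, y x, deriv y x)) x := by
  simpa [Px, Py, Pz] using
    hasDerivAt_comp_curve3 f y (deriv y) x (deriv y x) (deriv (deriv y) x) hf hy hy'

lemma hasDerivAt_outer {φ : ℝ × ℝ → ℝ} (w : ℝ → ℝ) (y : ℝ → ℝ) (x : ℝ)
    (hφd : DifferentiableAt ℝ φ (x, y x))
    (hw : DifferentiableAt ℝ w (φ (x, y x))) (hy : HasDerivAt y (deriv y x) x) :
    HasDerivAt (fun t => w (φ (t, y t)))
      (deriv w (φ (x, y x)) * KK φ (x, y x, deriv y x)) x := by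
  have h1 := hasDerivAt_comp_curve2 φ y x (deriv y x) hφd hy
  have h2 := (hw.hasDerivAt).comp x h1
  simpa [KK, Function.comp_def] using h2

end TangentAux2

/-- Case (a) of Theorem 1 of the paper: for a tangent transformation `t = φ(x,y)`,
`u = ψ(x,y,p)` with `φ_x + p φ_y ≠ 0` and `ψ_p ≠ 0`, the pullback of `u''' = 0` has the
form `c · (y'''' + (A₁ y'' + A₀) y''' + B₃ (y'')³ + B₂ (y'')² + B₁ y'' + B₀)` with
coefficients depending only on `(x, y, y')` and `c` nowhere vanishing. -/
theorem stmt_7 (φ : ℝ × ℝ → ℝ) (hφ : ContDiff ℝ 4 φ)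
    (ψ : ℝ × ℝ × ℝ → ℝ) (hψ : ContDiff ℝ 4 ψ)
    (hφk : ∀ v : ℝ × ℝ × ℝ,
      deriv (fun t => φ (t, v.2.1)) v.1 + v.2.2 * deriv (fun t => φ (v.1, t)) v.2.1 ≠ 0)
    (hψp : ∀ v : ℝ × ℝ × ℝ, deriv (fun p => ψ (v.1, v.2.1, p)) v.2.2 ≠ 0) :
    ∃ A₁ A₀ B₃ B₂ B₁ B₀ c : ℝ × ℝ × ℝ → ℝ,
      Continuous A₁ ∧ Continuous A₀ ∧ Continuous B₃ ∧ Continuous B₂ ∧ Continuous B₁ ∧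
      Continuous B₀ ∧ Continuous c ∧ (∀ v : ℝ × ℝ × ℝ, c v ≠ 0) ∧
      ∀ (I : Set ℝ), IsOpen I → IsPreconnected I →
        ∀ (y : ℝ → ℝ), ContDiffOn ℝ 4 y I →
          ∀ (u : ℝ → ℝ), ContDiff ℝ 3 u →
            (∀ x ∈ I, u (φ (x, y x)) = ψ (x, y x, deriv y x)) →
            ∀ x ∈ I,
              deriv (deriv (deriv u)) (φ (x, y x)) =
                c (x, y x, deriv y x) *
                  (deriv (deriv (deriv (deriv y))) x
                    + (A₁ (x, y x, deriv y x) * deriv (deriv y) x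
                        + A₀ (x, y x, deriv y x)) * deriv (deriv (deriv y)) x
                    + B₃ (x, y x, deriv y x) * (deriv (deriv y) x) ^ 3
                    + B₂ (x, y x, deriv y x) * (deriv (deriv y) x) ^ 2
                    + B₁ (x, y x, deriv y x) * deriv (deriv y) x
                    + B₀ (x, y x, deriv y x)) := by
  have hφd : Differentiable ℝ φ := hφ.differentiable (by norm_num)
  have hψd : Differentiable ℝ ψ := hψ.differentiable (by norm_num)
  have hK : ∀ v, KK φ v ≠ 0 := by
    intro v
    have h1 := deriv_partial1 φ (a := v.1) (b := v.2.1) (hφd _)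
    have h2 := deriv_partial2 φ (a := v.1) (b := v.2.1) (hφd _)
    have h := hφk v
    rw [h1, h2] at h
    exact h
  have hψz : ∀ v, Pz ψ v ≠ 0 := by
    intro v
    have h3 := deriv_partial3' ψ (a := v.1) (b := v.2.1) (c := v.2.2) (hψd _)
    have h := hψp v
    rw [h3] at h
    simpa [Pz] using h
  have ha3 := contDiff_aa hφ hψ hK
  have hb3 := contDiff_bb hφ hψ hK
  have hal := contDiff_AL hφ hψ hK
  have hbe := contDiff_BE hφ hψ hK
  have hga := contDiff_GA hφ hψ hK
  have hde := contDiff_DE hφ hψ hK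
  have hALne : ∀ v, AL φ ψ v ≠ 0 := by
    intro v
    unfold AL aa
    exact div_ne_zero (div_ne_zero (hψz v) (hK v)) (hK v)
  refine ⟨fun v => (Pz (AL φ ψ) v + 2 * BE φ ψ v) / AL φ ψ v,
    fun v => (Px (AL φ ψ) v + v.2.2 * Py (AL φ ψ) v + GA φ ψ v) / AL φ ψ v,
    fun v => Pz (BE φ ψ) v / AL φ ψ v,
    fun v => (Px (BE φ ψ) v + v.2.2 * Py (BE φ ψ) v + Pz (GA φ ψ) v) / AL φ ψ v,
    fun v => (Px (GA φ ψ) v + v.2.2 * Py (GA φ ψ) v + Pz (DE φ ψ) v) / AL φ ψ v,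
    fun v => (Px (DE φ ψ) v + v.2.2 * Py (DE φ ψ) v) / AL φ ψ v,
    fun v => AL φ ψ v / KK φ v, ?_, ?_, ?_, ?_, ?_, ?_, ?_, ?_, ?_⟩
  · exact (((contDiff_Pz (m := 1) hal (by norm_num)).continuous).add
      (continuous_const.mul hbe.continuous)).div hal.continuous hALne
  · exact ((((contDiff_Px (m := 1) hal (by norm_num)).continuous).add
      ((continuous_snd.comp continuous_snd).mul (contDiff_Py (m := 1) hal (by norm_num)).continuous)).add
      hga.continuous).div hal.continuous hALne
  · exact ((contDiff_Pz (m := 1) hbe (by norm_num)).continuous).div hal.continuous hALne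
  · exact ((((contDiff_Px (m := 1) hbe (by norm_num)).continuous).add
      ((continuous_snd.comp continuous_snd).mul (contDiff_Py (m := 1) hbe (by norm_num)).continuous)).add
      (contDiff_Pz (m := 1) hga (by norm_num)).continuous).div hal.continuous hALne
  · exact ((((contDiff_Px (m := 1) hga (by norm_num)).continuous).add
      ((continuous_snd.comp continuous_snd).mul (contDiff_Py (m := 1) hga (by norm_num)).continuous)).add
      (contDiff_Pz (m := 1) hde (by norm_num)).continuous).div hal.continuous hALne
  · exact (((contDiff_Px (m := 1) hde (by norm_num)).continuous).add
      ((continuous_snd.comp continuous_snd).mul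
        (contDiff_Py (m := 1) hde (by norm_num)).continuous)).div hal.continuous hALne
  · exact hal.continuous.div (contDiff_KK hφ).continuous hK
  · exact fun v => div_ne_zero (hALne v) (hK v)
  intro I hIo _ y hy u hu hequ
  have hy1 : ContDiffOn ℝ 3 (deriv y) I := hy.deriv_of_isOpen hIo (by norm_num)
  have hy2 : ContDiffOn ℝ 2 (deriv (deriv y)) I := hy1.deriv_of_isOpen hIo (by norm_num)
  have hy3 : ContDiffOn ℝ 1 (deriv (deriv (deriv y))) I := hy2.deriv_of_isOpen hIo (by norm_num)
  have hD0 : ∀ t ∈ I, HasDerivAt y (deriv y t) t := fun t ht =>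
    ((hy.differentiableOn (by norm_num)).differentiableAt (hIo.mem_nhds ht)).hasDerivAt
  have hD1 : ∀ t ∈ I, HasDerivAt (deriv y) (deriv (deriv y) t) t := fun t ht =>
    ((hy1.differentiableOn (by norm_num)).differentiableAt (hIo.mem_nhds ht)).hasDerivAt
  have hD2 : ∀ t ∈ I, HasDerivAt (deriv (deriv y)) (deriv (deriv (deriv y)) t) t := fun t ht =>
    ((hy2.differentiableOn (by norm_num)).differentiableAt (hIo.mem_nhds ht)).hasDerivAt
  have hD3 : ∀ t ∈ I,
      HasDerivAt (deriv (deriv (deriv y))) (deriv (deriv (deriv (deriv y))) t) t := fun t ht =>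
    ((hy3.differentiableOn (by norm_num)).differentiableAt (hIo.mem_nhds ht)).hasDerivAt
  have hu1 : ContDiff ℝ 2 (deriv u) := by
    have h31 : (3 : WithTop ℕ∞) = 2 + 1 := by norm_num
    rw [h31] at hu
    exact (contDiff_succ_iff_deriv.mp hu).2.2
  have hu2 : ContDiff ℝ 1 (deriv (deriv u)) := by
    have h21 : (2 : WithTop ℕ∞) = 1 + 1 := by norm_num
    rw [h21] at hu1
    exact (contDiff_succ_iff_deriv.mp hu1).2.2
  -- Step 1
  have Eq1 : ∀ t ∈ I, deriv u (φ (t, y t)) =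
      aa φ ψ (t, y t, deriv y t) * deriv (deriv y) t + bb φ ψ (t, y t, deriv y t) := by
    intro t ht
    have hL : HasDerivAt (fun s => u (φ (s, y s)))
        (deriv u (φ (t, y t)) * KK φ (t, y t, deriv y t)) t :=
      hasDerivAt_outer u y t (hφd _) ((hu.differentiable (by norm_num)) _) (hD0 t ht)
    have hR := hasDerivAt_curve ψ y t (hψd _) (hD0 t ht) (hD1 t ht)
    have hev : (fun s => u (φ (s, y s))) =ᶠ[nhds t] fun s => ψ (s, y s, deriv y s) :=
      Filter.eventually_of_mem (hIo.mem_nhds ht) (fun s hs => hequ s hs)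
    have EqA := hL.unique (hR.congr_of_eventuallyEq hev)
    have hKt := hK (t, y t, deriv y t)
    have h2 : deriv u (φ (t, y t)) =
        (Px ψ (t, y t, deriv y t) + deriv y t * Py ψ (t, y t, deriv y t)
          + deriv (deriv y) t * Pz ψ (t, y t, deriv y t)) / KK φ (t, y t, deriv y t) := by
      rw [eq_div_iff hKt]; exact EqA
    rw [h2]
    unfold aa bb
    field_simp
    ring
  -- Step 2
  have Eq2 : ∀ t ∈ I, deriv (deriv u) (φ (t, y t)) =
      AL φ ψ (t, y t, deriv y t) * deriv (deriv (deriv y)) t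
        + BE φ ψ (t, y t, deriv y t) * (deriv (deriv y) t) ^ 2
        + GA φ ψ (t, y t, deriv y t) * deriv (deriv y) t
        + DE φ ψ (t, y t, deriv y t) := by
    intro t ht
    have hL : HasDerivAt (fun s => deriv u (φ (s, y s)))
        (deriv (deriv u) (φ (t, y t)) * KK φ (t, y t, deriv y t)) t :=
      hasDerivAt_outer (deriv u) y t (hφd _) ((hu1.differentiable (by norm_num)) _) (hD0 t ht)
    have hRa := hasDerivAt_curve (aa φ ψ) y t ((ha3.differentiable (by norm_num)) _)
      (hD0 t ht) (hD1 t ht)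
    have hRb := hasDerivAt_curve (bb φ ψ) y t ((hb3.differentiable (by norm_num)) _)
      (hD0 t ht) (hD1 t ht)
    have hR := (hRa.mul (hD2 t ht)).add hRb
    have hev : (fun s => deriv u (φ (s, y s))) =ᶠ[nhds t]
        fun s => aa φ ψ (s, y s, deriv y s) * deriv (deriv y) s + bb φ ψ (s, y s, deriv y s) :=
      Filter.eventually_of_mem (hIo.mem_nhds ht) (fun s hs => Eq1 s hs)
    have EqB := hL.unique (hR.congr_of_eventuallyEq hev)
    have hKt := hK (t, y t, deriv y t)
    have h2 : deriv (deriv u) (φ (t, y t)) =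
        ((Px (aa φ ψ) (t, y t, deriv y t) + deriv y t * Py (aa φ ψ) (t, y t, deriv y t)
            + deriv (deriv y) t * Pz (aa φ ψ) (t, y t, deriv y t)) * deriv (deriv y) t
          + aa φ ψ (t, y t, deriv y t) * deriv (deriv (deriv y)) t
          + (Px (bb φ ψ) (t, y t, deriv y t) + deriv y t * Py (bb φ ψ) (t, y t, deriv y t)
            + deriv (deriv y) t * Pz (bb φ ψ) (t, y t, deriv y t)))
          / KK φ (t, y t, deriv y t) := by
      rw [eq_div_iff hKt]; exact EqB
    rw [h2]
    unfold AL BE GA DE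
    field_simp
    ring
  -- Step 3
  intro x hx
  have hL : HasDerivAt (fun s => deriv (deriv u) (φ (s, y s)))
      (deriv (deriv (deriv u)) (φ (x, y x)) * KK φ (x, y x, deriv y x)) x :=
    hasDerivAt_outer (deriv (deriv u)) y x (hφd _)
      ((hu2.differentiable (by norm_num)) _) (hD0 x hx)
  have hRal := hasDerivAt_curve (AL φ ψ) y x ((hal.differentiable (by norm_num)) _)
    (hD0 x hx) (hD1 x hx)
  have hRbe := hasDerivAt_curve (BE φ ψ) y x ((hbe.differentiable (by norm_num)) _)
    (hD0 x hx) (hD1 x hx)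
  have hRga := hasDerivAt_curve (GA φ ψ) y x ((hga.differentiable (by norm_num)) _)
    (hD0 x hx) (hD1 x hx)
  have hRde := hasDerivAt_curve (DE φ ψ) y x ((hde.differentiable (by norm_num)) _)
    (hD0 x hx) (hD1 x hx)
  have hR := (((hRal.mul (hD3 x hx)).add (hRbe.mul ((hD2 x hx).pow 2))).add
    (hRga.mul (hD2 x hx))).add hRde
  have hev : (fun s => deriv (deriv u) (φ (s, y s))) =ᶠ[nhds x]
      fun s => AL φ ψ (s, y s, deriv y s) * deriv (deriv (deriv y)) s
        + BE φ ψ (s, y s, deriv y s) * (deriv (deriv y) s) ^ 2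
        + GA φ ψ (s, y s, deriv y s) * deriv (deriv y) s
        + DE φ ψ (s, y s, deriv y s) :=
    Filter.eventually_of_mem (hIo.mem_nhds hx) (fun s hs => Eq2 s hs)
  have EqC := hL.unique (hR.congr_of_eventuallyEq hev)
  have hKx := hK (x, y x, deriv y x)
  have hALx := hALne (x, y x, deriv y x)
  have h3 : deriv (deriv (deriv u)) (φ (x, y x)) =
      ((Px (AL φ ψ) (x, y x, deriv y x) + deriv y x * Py (AL φ ψ) (x, y x, deriv y x)
          + deriv (deriv y) x * Pz (AL φ ψ) (x, y x, deriv y x)) * deriv (deriv (deriv y)) x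
        + AL φ ψ (x, y x, deriv y x) * deriv (deriv (deriv (deriv y))) x
        + ((Px (BE φ ψ) (x, y x, deriv y x) + deriv y x * Py (BE φ ψ) (x, y x, deriv y x)
            + deriv (deriv y) x * Pz (BE φ ψ) (x, y x, deriv y x)) * (deriv (deriv y) x) ^ 2
          + BE φ ψ (x, y x, deriv y x)
            * ((2 : ℕ) * (deriv (deriv y) x) ^ (2 - 1) * deriv (deriv (deriv y)) x))
        + ((Px (GA φ ψ) (x, y x, deriv y x) + deriv y x * Py (GA φ ψ) (x, y x, deriv y x)
            + deriv (deriv y) x * Pz (GA φ ψ) (x, y x, deriv y x)) * deriv (deriv y) x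
          + GA φ ψ (x, y x, deriv y x) * deriv (deriv (deriv y)) x)
        + (Px (DE φ ψ) (x, y x, deriv y x) + deriv y x * Py (DE φ ψ) (x, y x, deriv y x)
          + deriv (deriv y) x * Pz (DE φ ψ) (x, y x, deriv y x)))
        / KK φ (x, y x, deriv y x) := by
    rw [eq_div_iff hKx]; exact EqC
  rw [h3]
  field_simp
  ring
end

section
/- Let φ : ℝ² → ℝ (written φ(x,y)) be twice continuously differentiable. Define k : ℝ³ → ℝ by k(x,y,p) = φ_x(x,y) + p·φ_y(x,y), suppose k ≠ 0 on an open set U ⊆ ℝ³, and define λ : U → ℝ by λ(x,y,p) = φ_y(x,y)/k(x,y,p). Then for all (x,y,p) ∈ U: λ·k_x + (p·λ − 1)·k_y + (λ_x + p·λ_y)·k = 0, where k_x, k_y, λ_x, λ_y denote the partial derivatives of k and λ (as functions of (x,y,p)) with respect to x and y. -/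
open ContinuousLinearMap

private lemma partial_fst' {g : ℝ × ℝ → ℝ} {G : ℝ × ℝ →L[ℝ] ℝ} {x y : ℝ}
    (h : HasFDerivAt g G (x, y)) :
    HasDerivAt (fun t => g (t, y)) (G (1, 0)) x := by
  have h1 : HasDerivAt (fun t : ℝ => (t, y)) ((1 : ℝ), (0 : ℝ)) x :=
    (hasDerivAt_id x).prodMk (hasDerivAt_const x y)
  exact h.comp_hasDerivAt x h1

private lemma partial_snd' {g : ℝ × ℝ → ℝ} {G : ℝ × ℝ →L[ℝ] ℝ} {x y : ℝ}
    (h : HasFDerivAt g G (x, y)) :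
    HasDerivAt (fun t => g (x, t)) (G (0, 1)) y := by
  have h1 : HasDerivAt (fun t : ℝ => (x, t)) ((0 : ℝ), (1 : ℝ)) y :=
    (hasDerivAt_const y x).prodMk (hasDerivAt_id y)
  exact h.comp_hasDerivAt y h1



/-- Equation (16) of the paper: with `k = φ_x + p φ_y` nonvanishing on an open set `U` and
`λ = φ_y / k`, one has `λ k_x + (p λ − 1) k_y + (λ_x + p λ_y) k = 0` on `U`. -/
theorem stmt_12 (φ : ℝ × ℝ → ℝ) (hφ : ContDiff ℝ 2 φ)
    (k : ℝ × ℝ × ℝ → ℝ)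
    (hk : ∀ v : ℝ × ℝ × ℝ,
      k v = deriv (fun t => φ (t, v.2.1)) v.1 + v.2.2 * deriv (fun t => φ (v.1, t)) v.2.1)
    (U : Set (ℝ × ℝ × ℝ)) (hU : IsOpen U) (hkne : ∀ v ∈ U, k v ≠ 0)
    (lam : ℝ × ℝ × ℝ → ℝ)
    (hlam : ∀ v ∈ U, lam v = deriv (fun t => φ (v.1, t)) v.2.1 / k v) :
    ∀ v ∈ U,
      lam v * deriv (fun t => k (t, v.2.1, v.2.2)) v.1
        + (v.2.2 * lam v - 1) * deriv (fun t => k (v.1, t, v.2.2)) v.2.1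
        + (deriv (fun t => lam (t, v.2.1, v.2.2)) v.1
            + v.2.2 * deriv (fun t => lam (v.1, t, v.2.2)) v.2.1) * k v = 0 := by
  have hφd : Differentiable ℝ φ := hφ.differentiable (by norm_num)
  have hf'c : ContDiff ℝ 1 (fderiv ℝ φ) := hφ.fderiv_right (by norm_num)
  have hf'd : Differentiable ℝ (fderiv ℝ φ) := hf'c.differentiable (by norm_num)
  set f' := fderiv ℝ φ with hf'def
  set f'' := fun q => fderiv ℝ f' q with hf''def
  -- A and B : the two partials of φ as functions on ℝ²
  have hA : ∀ a b : ℝ, HasFDerivAt (fun q : ℝ × ℝ => f' q (1, 0))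
      ((apply ℝ ℝ ((1:ℝ), (0:ℝ))).comp (f'' (a, b))) (a, b) := fun a b =>
    (apply ℝ ℝ ((1:ℝ), (0:ℝ))).hasFDerivAt.comp (a, b) (hf'd (a, b)).hasFDerivAt
  have hB : ∀ a b : ℝ, HasFDerivAt (fun q : ℝ × ℝ => f' q (0, 1))
      ((apply ℝ ℝ ((0:ℝ), (1:ℝ))).comp (f'' (a, b))) (a, b) := fun a b =>
    (apply ℝ ℝ ((0:ℝ), (1:ℝ))).hasFDerivAt.comp (a, b) (hf'd (a, b)).hasFDerivAt
  have hkval : ∀ a b c : ℝ, k (a, b, c) = f' (a, b) (1, 0) + c * f' (a, b) (0, 1) := by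
    intro a b c
    rw [hk (a, b, c)]
    simp only
    rw [(partial_fst' (hφd (a, b)).hasFDerivAt).deriv,
      (partial_snd' (hφd (a, b)).hasFDerivAt).deriv]
  intro v hv
  obtain ⟨x, y, p⟩ := v
  simp only
  have hK : k (x, y, p) ≠ 0 := hkne _ hv
  -- slice derivatives of A and B
  have hAx : HasDerivAt (fun t => f' (t, y) (1, 0)) (f'' (x, y) (1, 0) (1, 0)) x := by
    simpa using partial_fst' (hA x y)
  have hBx : HasDerivAt (fun t => f' (t, y) (0, 1)) (f'' (x, y) (1, 0) (0, 1)) x := by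
    simpa using partial_fst' (hB x y)
  have hAy : HasDerivAt (fun t => f' (x, t) (1, 0)) (f'' (x, y) (0, 1) (1, 0)) y := by
    simpa using partial_snd' (hA x y)
  have hBy : HasDerivAt (fun t => f' (x, t) (0, 1)) (f'' (x, y) (0, 1) (0, 1)) y := by
    simpa using partial_snd' (hB x y)
  -- slice derivatives of k
  have hkx : HasDerivAt (fun t => k (t, y, p))
      (f'' (x, y) (1, 0) (1, 0) + p * f'' (x, y) (1, 0) (0, 1)) x := by
    have he : (fun t => k (t, y, p)) = fun t => f' (t, y) (1, 0) + p * f' (t, y) (0, 1) :=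
      funext fun t => hkval t y p
    rw [he]
    exact hAx.add (hBx.const_mul p)
  have hky : HasDerivAt (fun t => k (x, t, p))
      (f'' (x, y) (0, 1) (1, 0) + p * f'' (x, y) (0, 1) (0, 1)) y := by
    have he : (fun t => k (x, t, p)) = fun t => f' (x, t) (1, 0) + p * f' (x, t) (0, 1) :=
      funext fun t => hkval x t p
    rw [he]
    exact hAy.add (hBy.const_mul p)
  -- lam near the point
  have hmemx : ∀ᶠ t in nhds x, (t, y, p) ∈ U := by
    have hc : Continuous (fun t : ℝ => (t, y, p)) :=
      continuous_id.prodMk (continuous_const.prodMk continuous_const)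
    exact hc.continuousAt.preimage_mem_nhds (hU.mem_nhds hv)
  have hmemy : ∀ᶠ t in nhds y, (x, t, p) ∈ U := by
    have hc : Continuous (fun t : ℝ => (x, t, p)) :=
      continuous_const.prodMk (continuous_id.prodMk continuous_const)
    exact hc.continuousAt.preimage_mem_nhds (hU.mem_nhds hv)
  have hlamval : ∀ a b c : ℝ, (a, b, c) ∈ U → lam (a, b, c) = f' (a, b) (0, 1) / k (a, b, c) := by
    intro a b c h
    rw [hlam _ h]
    simp only
    rw [(partial_snd' (hφd (a, b)).hasFDerivAt).deriv]
  have hlamx : HasDerivAt (fun t => f' (t, y) (0, 1) / k (t, y, p))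
      ((f'' (x, y) (1, 0) (0, 1) * k (x, y, p) -
        f' (x, y) (0, 1) * (f'' (x, y) (1, 0) (1, 0) + p * f'' (x, y) (1, 0) (0, 1)))
        / k (x, y, p) ^ 2) x := hBx.div hkx hK
  have hlamy : HasDerivAt (fun t => f' (x, t) (0, 1) / k (x, t, p))
      ((f'' (x, y) (0, 1) (0, 1) * k (x, y, p) -
        f' (x, y) (0, 1) * (f'' (x, y) (0, 1) (1, 0) + p * f'' (x, y) (0, 1) (0, 1)))
        / k (x, y, p) ^ 2) y := hBy.div hky hK
  have hdx : deriv (fun t => lam (t, y, p)) x = deriv (fun t => f' (t, y) (0, 1) / k (t, y, p)) x :=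
    Filter.EventuallyEq.deriv_eq (hmemx.mono fun t ht => hlamval t y p ht)
  have hdy : deriv (fun t => lam (x, t, p)) y = deriv (fun t => f' (x, t) (0, 1) / k (x, t, p)) y :=
    Filter.EventuallyEq.deriv_eq (hmemy.mono fun t ht => hlamval x t p ht)
  have hsym : f'' (x, y) (1, 0) (0, 1) = f'' (x, y) (0, 1) (1, 0) :=
    second_derivative_symmetric (fun q => (hφd q).hasFDerivAt) (hf'd (x, y)).hasFDerivAt _ _
  rw [hlamval x y p hv, hkx.deriv, hky.deriv, hdx, hlamx.deriv, hdy, hlamy.deriv, hsym]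
  field_simp
  ring
end
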